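/- arXiv:1604.02471 — 6 statements merged into one kernel-verified Lean document; each statement's English description precedes it below -/
import Mathlib

section
/- Let n ≥ 2, let 𝓛 and 𝓛′ be subgroups of ℤⁿ, and let 0 ≤ p₀ ≤ n−1. Then M_𝓛(k,p) = M_𝓛′(k,p) for all integers k ≥ 1 and all 1 ≤ p ≤ p₀+1 if and only if Σ_{ℓ=0}^{n} ℓʰ N_𝓛(k,ℓ) = Σ_{ℓ=0}^{n} ℓʰ N_𝓛′(k,ℓ) for all k ≥ 0 and all 0 ≤ h ≤ p₀. (This is the combinatorial content of Corollary 2.4: the left-hand condition expresses that the corresponding spherical quotients Γ\S^{2n−1} and Γ′\S^{2n−1} are p-isospectral for all 0 ≤ p ≤ p₀.) -/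
noncomputable section

open Finset PowerSeries

/-- Binomial coefficient `binom b a` with integer arguments,
zero when `a < 0` or `b < a`. -/
def ibinom (b a : ℤ) : ℤ := if a < 0 ∨ b < a then 0 else (b.toNat.choose a.toNat : ℤ)

/-- One-norm `‖μ‖` of an integer vector. -/
def onenorm {n : ℕ} (μ : Fin n → ℤ) : ℕ := ∑ i, (μ i).natAbs

/-- `Z(μ)`: number of zero coordinates. -/
def zcount {n : ℕ} (μ : Fin n → ℤ) : ℕ := (univ.filter fun i => μ i = 0).card

/-- `N_𝓛(k, ℓ)`. -/
def Ncard {n : ℕ} (L : Set (Fin n → ℤ)) (k ℓ : ℕ) : ℕ :=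
  {μ : Fin n → ℤ | μ ∈ L ∧ onenorm μ = k ∧ zcount μ = ℓ}.ncard

/-- `N_𝓛(k)`. -/
def NcardTot {n : ℕ} (L : Set (Fin n → ℤ)) (k : ℕ) : ℕ :=
  {μ : Fin n → ℤ | μ ∈ L ∧ onenorm μ = k}.ncard

/-- `ϑ_𝓛^{(ℓ)}(z) = Σ_{k≥0} N_𝓛(k,ℓ) z^k`. -/
def thetaL {n : ℕ} (L : Set (Fin n → ℤ)) (ℓ : ℕ) : PowerSeries ℤ :=
  PowerSeries.mk fun k => (Ncard L k ℓ : ℤ)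

/-- `ϑ_𝓛(z) = Σ_{k≥0} N_𝓛(k) z^k`. -/
def thetaTot {n : ℕ} (L : Set (Fin n → ℤ)) : PowerSeries ℤ :=
  PowerSeries.mk fun k => (NcardTot L k : ℤ)

/-- `N_𝓛^red(k,ℓ)`, counting elements of `C(q) ∩ 𝓛`. -/
def NcardRed {n : ℕ} (L : Set (Fin n → ℤ)) (q k ℓ : ℕ) : ℕ :=
  {μ : Fin n → ℤ | (∀ i, |μ i| < (q : ℤ)) ∧ μ ∈ L ∧ onenorm μ = k ∧ zcount μ = ℓ}.ncard

/-- `Φ_𝓛^{(ℓ)}(z) = Σ_{k≥0} N_𝓛^red(k,ℓ) z^k`. -/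
def PhiL {n : ℕ} (L : Set (Fin n → ℤ)) (q ℓ : ℕ) : PowerSeries ℤ :=
  PowerSeries.mk fun k => (NcardRed L q k ℓ : ℤ)

/-- `𝓛` is `q`-periodic: `μ ∈ 𝓛 ↔ μ + qν ∈ 𝓛`. -/
def qPeriodic {n : ℕ} (q : ℕ) (L : Set (Fin n → ℤ)) : Prop :=
  ∀ μ ν : Fin n → ℤ, μ ∈ L ↔ (μ + (q : ℤ) • ν) ∈ L

/-- `M_𝓛(k,p)`. -/
def Mcoef {n : ℕ} (L : Set (Fin n → ℤ)) (k p : ℕ) : ℤ :=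
  ∑ ℓ ∈ range (n+1), ∑ r ∈ range ((k-1+p)/2 + 1),
    (Ncard L (k-1+p-2*r) ℓ : ℤ) *
    ∑ j ∈ Icc 1 p, (-1 : ℤ)^(j-1) *
      ∑ t ∈ range ((p-j)/2 + 1), ibinom ((n : ℤ) - p + j + 2*t) t *
        ∑ β ∈ range (p-j-2*t+1),
          2^(p-j-2*t-β) * ibinom ((n : ℤ) - ℓ) β * ibinom (ℓ : ℤ) ((p-j-2*t-β : ℕ)) *
          ∑ α ∈ range (β+1), ibinom (β : ℤ) α *
            ∑ i ∈ range j, ibinom ((r : ℤ) - i - p + j + α + t + n - 2) ((n : ℤ) - 2)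

/-- `Ã_p^{(ℓ)}(z) = z^p A_p^{(ℓ)}(z)`. -/
def Atilde (n p ℓ : ℕ) : PowerSeries ℤ :=
  ∑ j ∈ Icc 1 p, C (R := ℤ) ((-1 : ℤ)^(j-1)) *
    ∑ t ∈ range ((p-j)/2 + 1), C (R := ℤ) (ibinom ((n : ℤ) - p + j + 2*t) t) *
      ∑ β ∈ range (p-j-2*t+1),
        C (R := ℤ) (2^(p-j-2*t-β) * ibinom ((n : ℤ) - ℓ) β * ibinom (ℓ : ℤ) ((p-j-2*t-β : ℕ))) *
        ∑ α ∈ range (β+1), C (R := ℤ) (ibinom (β : ℤ) α) *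
          ∑ i ∈ range j, (X : PowerSeries ℤ)^(2*p - 2*(j+t+α-i))

/-- `Υ_m^{(ℓ)}(z)`; zero when `m < 0`. -/
def Upsilon {n : ℕ} (L : Set (Fin n → ℤ)) (m : ℤ) (ℓ : ℕ) : PowerSeries ℤ :=
  if m < 0 then 0 else
    ∑ h ∈ range (m.toNat + 1),
      C (R := ℤ) (∑ s ∈ range (h/2 + 1), (Ncard L (h - 2*s) ℓ : ℤ) * ((s + n - 2).choose (n-2) : ℤ)) *
        (X : PowerSeries ℤ)^h

/-- `B̃_{𝓛,p}^{(ℓ)}(z) = z^p B_{𝓛,p}^{(ℓ)}(z)`. -/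
def Btilde {n : ℕ} (L : Set (Fin n → ℤ)) (p ℓ : ℕ) : PowerSeries ℤ :=
  ∑ j ∈ Icc 1 p, C (R := ℤ) ((-1 : ℤ)^(j-1)) *
    ∑ t ∈ range ((p-j)/2 + 1), C (R := ℤ) (ibinom ((n : ℤ) - p + j + 2*t) t) *
      ∑ β ∈ range (p-j-2*t+1),
        C (R := ℤ) (2^(p-j-2*t-β) * ibinom ((n : ℤ) - ℓ) β * ibinom (ℓ : ℤ) ((p-j-2*t-β : ℕ))) *
        ∑ α ∈ range (β+1), C (R := ℤ) (ibinom (β : ℤ) α) *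
          ∑ i ∈ range j,
            (X : PowerSeries ℤ)^(2*p - 2*(j+t+α-i)) *
              Upsilon L (2*((j : ℤ) + t + α - i) - p - 1) ℓ

/-- `C_{p,g}^{(ℓ)}`. -/
def Cpg (n p g ℓ : ℕ) : ℤ :=
  ∑ j ∈ Icc 1 p, (-1 : ℤ)^(j-1) *
    ∑ t ∈ range ((p-j)/2 + 1), ibinom ((n : ℤ) - p + j + 2*t) t *
      ∑ β ∈ range (p-j-2*t+1),
        2^(p-j-2*t-β) * ibinom ((n : ℤ) - ℓ) β * ibinom (ℓ : ℤ) ((p-j-2*t-β : ℕ)) *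
        ∑ i ∈ range j, ibinom (β : ℤ) ((p : ℤ) + i - j - t - g)

namespace Stmt1Aux
open Polynomial



lemma prod_range_cast_choose (a m : ℕ) :
    ∏ i ∈ range a, ((m : ℚ) - i) = (a.factorial : ℚ) * (m.choose a : ℚ) := by
  induction a with
  | zero => simp
  | succ a ih =>
    rw [Finset.prod_range_succ, ih]
    rcases le_or_gt a m with hle | hlt
    · have key : (m.choose (a+1) : ℚ) * (a+1) = (m.choose a : ℚ) * ((m : ℚ) - a) := by
        have h := Nat.choose_succ_right_eq m a
        have h2 : ((m - a : ℕ) : ℚ) = (m : ℚ) - a := by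
          push_cast [hle]; ring
        calc (m.choose (a+1) : ℚ) * (a+1) = ((m.choose (a+1) * (a+1) : ℕ) : ℚ) := by push_cast; ring
          _ = ((m.choose a * (m - a) : ℕ) : ℚ) := by rw [h]
          _ = (m.choose a : ℚ) * ((m : ℚ) - a) := by push_cast; rw [h2]
      rw [Nat.factorial_succ]
      push_cast
      nlinarith [key]
    · have h1 : m.choose a = 0 := Nat.choose_eq_zero_of_lt hlt
      have h2 : m.choose (a+1) = 0 := Nat.choose_eq_zero_of_lt (by omega)
      simp [h1, h2]

/-- `pchd a q`: polynomial `binom(q, a)`. -/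
def pchd (a : ℕ) (q : Polynomial ℚ) : Polynomial ℚ :=
  Polynomial.C ((a.factorial : ℚ))⁻¹ * ∏ i ∈ range a, (q - Polynomial.C (i : ℚ))

lemma pchd_eval (a : ℕ) (q : Polynomial ℚ) (x : ℚ) (m : ℕ) (hq : q.eval x = (m : ℚ)) :
    (pchd a q).eval x = (m.choose a : ℚ) := by
  have hfac : (a.factorial : ℚ) ≠ 0 := Nat.cast_ne_zero.mpr a.factorial_ne_zero
  rw [pchd, eval_mul, eval_C, eval_prod]
  simp only [eval_sub, eval_C, hq]
  rw [prod_range_cast_choose, ← mul_assoc, inv_mul_cancel₀ hfac, one_mul]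

lemma pchd_natDegree (a : ℕ) (q : Polynomial ℚ) (hq : q.natDegree ≤ 1) :
    (pchd a q).natDegree ≤ a := by
  refine natDegree_mul_le.trans ?_
  rw [natDegree_C, zero_add]
  refine (natDegree_prod_le _ _).trans ?_
  have h : ∀ i ∈ range a, (q - Polynomial.C (i:ℚ)).natDegree ≤ 1 :=
    fun i _ => (natDegree_sub_le _ _).trans (by simpa using hq)
  have := Finset.sum_le_sum h
  simpa using this

lemma natDegree_prod_linear_le (a : ℕ) (b : ℕ → ℚ) :
    (∏ i ∈ range a, (Polynomial.C (b i) - Polynomial.X)).natDegree ≤ a := by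
  refine (natDegree_prod_le _ _).trans ?_
  have h : ∀ i ∈ range a, (Polynomial.C (b i) - Polynomial.X).natDegree ≤ 1 :=
    fun i _ => (natDegree_sub_le _ _).trans (by simp)
  have := Finset.sum_le_sum h
  simpa using this

lemma coeff_prod_linear' (a : ℕ) (b : ℕ → ℚ) :
    (∏ i ∈ range a, (Polynomial.C (b i) - Polynomial.X)).coeff a = (-1 : ℚ)^a := by
  induction a with
  | zero => simp
  | succ a ih =>
    rw [Finset.prod_range_succ, mul_sub, coeff_sub, Polynomial.coeff_mul_C, Polynomial.coeff_mul_X,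
      coeff_eq_zero_of_natDegree_lt (lt_of_le_of_lt (natDegree_prod_linear_le a b) (by omega)),
      zero_mul, zero_sub, ih, pow_succ]
    ring

lemma coeff_prod_linear (a : ℕ) (c : ℚ) :
    (∏ i ∈ range a, (Polynomial.C c - Polynomial.X - Polynomial.C (i : ℚ))).coeff a
      = (-1 : ℚ)^a := by
  have hrw : ∀ i ∈ range a, Polynomial.C c - Polynomial.X - Polynomial.C (i : ℚ)
      = Polynomial.C (c - i) - Polynomial.X := by
    intro i _; rw [map_sub]; ring
  rw [Finset.prod_congr rfl hrw, coeff_prod_linear']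


lemma ibinom_natCast (b a : ℕ) : ibinom (b : ℤ) (a : ℤ) = (b.choose a : ℤ) := by
  rw [ibinom]
  split_ifs with hcond
  · rcases hcond with hneg | hlt
    · exact absurd hneg (by omega)
    · rw [Nat.choose_eq_zero_of_lt (by exact_mod_cast hlt)]; simp
  · simp

lemma ibinom_of_lt {b a : ℤ} (h : b < a) : ibinom b a = 0 := if_pos (Or.inr h)

lemma ibinom_zero_of_nonneg {b : ℤ} (hb : 0 ≤ b) : ibinom b 0 = 1 := by
  rw [ibinom, if_neg (by omega)]
  simp

/-- Innermost polynomial block of `polyW`. -/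
def polyInner (n p r j t : ℕ) : Polynomial ℚ :=
  ∑ β ∈ range (p-j-2*t+1),
    Polynomial.C ((2:ℚ)^(p-j-2*t-β)) *
      pchd β (Polynomial.C (n:ℚ) - Polynomial.X) * pchd (p-j-2*t-β) Polynomial.X *
      Polynomial.C (∑ α ∈ range (β+1), (ibinom (β:ℤ) (α:ℤ) : ℚ) *
        ∑ i ∈ range j, (ibinom ((r:ℤ) - i - p + j + α + t + n - 2) ((n:ℤ) - 2) : ℚ))

/-- Middle block of `polyW`. -/
def polyJ (n p r j : ℕ) : Polynomial ℚ :=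
  ∑ t ∈ range ((p-j)/2+1), Polynomial.C ((ibinom ((n:ℤ) - p + j + 2*t) t : ℚ)) *
    polyInner n p r j t

/-- The polynomial in `ℓ` underlying the inner sums of `Mcoef`. -/
def polyW (n p r : ℕ) : Polynomial ℚ :=
  ∑ j ∈ Icc 1 p, Polynomial.C ((-1:ℚ)^(j-1)) * polyJ n p r j

lemma hCnX_natDegree (n : ℕ) : (Polynomial.C (n:ℚ) - Polynomial.X).natDegree ≤ 1 :=
  (natDegree_sub_le _ _).trans (by simp)

lemma polyInner_natDegree (n p r j t : ℕ) :
    (polyInner n p r j t).natDegree ≤ p - j - 2*t := by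
  refine natDegree_sum_le_of_forall_le _ _ fun β hβ => ?_
  have hβ' : β ≤ p - j - 2*t := by simpa using Nat.lt_succ_iff.mp (mem_range.mp hβ)
  refine natDegree_mul_le.trans ?_
  rw [natDegree_C]
  refine (add_le_add_left (natDegree_mul_le.trans (add_le_add
    (natDegree_mul_le.trans (add_le_add (le_of_eq (natDegree_C _))
      (pchd_natDegree β _ (hCnX_natDegree n))))
    (pchd_natDegree _ Polynomial.X natDegree_X_le))) 0).trans ?_
  omega

lemma polyJ_natDegree (n p r j : ℕ) : (polyJ n p r j).natDegree ≤ p - j := by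
  refine natDegree_sum_le_of_forall_le _ _ fun t ht => ?_
  refine natDegree_mul_le.trans ?_
  rw [natDegree_C, zero_add]
  exact (polyInner_natDegree n p r j t).trans (by omega)

lemma polyW_natDegree (n p r : ℕ) : (polyW n p r).natDegree ≤ p - 1 := by
  refine natDegree_sum_le_of_forall_le _ _ fun j hj => ?_
  have hj1 : 1 ≤ j := (mem_Icc.mp hj).1
  refine natDegree_mul_le.trans ?_
  rw [natDegree_C, zero_add]
  exact (polyJ_natDegree n p r j).trans (by omega)

lemma polyW_eval (n p r ℓ : ℕ) (hl : ℓ ≤ n) :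
    (polyW n p r).eval (ℓ:ℚ) =
    ((∑ j ∈ Icc 1 p, (-1:ℤ)^(j-1) *
      ∑ t ∈ range ((p-j)/2 + 1), ibinom ((n:ℤ) - p + j + 2*t) t *
        ∑ β ∈ range (p-j-2*t+1),
          2^(p-j-2*t-β) * ibinom ((n:ℤ) - ℓ) β * ibinom (ℓ:ℤ) ((p-j-2*t-β : ℕ)) *
          ∑ α ∈ range (β+1), ibinom (β:ℤ) α *
            ∑ i ∈ range j, ibinom ((r:ℤ) - i - p + j + α + t + n - 2) ((n:ℤ) - 2) : ℤ) : ℚ) := by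
  have hnl : ((n:ℤ) - ℓ) = ((n - ℓ : ℕ) : ℤ) := by omega
  rw [polyW, eval_finset_sum]
  push_cast
  refine Finset.sum_congr rfl fun j hj => ?_
  rw [eval_mul, eval_C, polyJ, eval_finset_sum]
  congr 1
  refine Finset.sum_congr rfl fun t ht => ?_
  rw [eval_mul, eval_C, polyInner, eval_finset_sum]
  congr 1
  refine Finset.sum_congr rfl fun β hβ => ?_
  rw [eval_mul, eval_mul, eval_mul, eval_C, eval_C,
    pchd_eval β _ _ (n - ℓ) (by rw [eval_sub, eval_C, eval_X]; push_cast [hl]; ring),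
    pchd_eval _ _ _ ℓ eval_X,
    hnl, ibinom_natCast, ibinom_natCast]
  push_cast
  ring

lemma polyW_coeff (n h : ℕ) (hn : 2 ≤ n) (hhn : h < n) :
    (polyW n (h+1) 0).coeff h = (-1:ℚ)^h * ((h.factorial : ℚ))⁻¹ := by
  rw [polyW, finset_sum_coeff]
  rw [Finset.sum_eq_single_of_mem 1 (by simp)]
  swap
  · intro j hj hj1
    have hj2 : 2 ≤ j := by rcases mem_Icc.mp hj with ⟨h1, h2⟩; omega
    have hjle : j ≤ h + 1 := (mem_Icc.mp hj).2
    rw [Polynomial.coeff_C_mul, coeff_eq_zero_of_natDegree_lt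
      (lt_of_le_of_lt (polyJ_natDegree n (h+1) 0 j) (by omega)), mul_zero]
  rw [Polynomial.coeff_C_mul]
  norm_num
  rw [polyJ, finset_sum_coeff, Finset.sum_eq_single_of_mem 0 (by simp)]
  swap
  · intro t ht ht0
    have ht1 : 1 ≤ t := Nat.one_le_iff_ne_zero.mpr ht0
    have ht2 : t ≤ (h+1-1)/2 := Nat.lt_succ_iff.mp (mem_range.mp ht)
    rw [Polynomial.coeff_C_mul, coeff_eq_zero_of_natDegree_lt
      (lt_of_le_of_lt (polyInner_natDegree n (h+1) 0 1 t) (by omega)), mul_zero]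
  have hscal : ibinom ((n:ℤ) - ((h+1:ℕ):ℤ) + ((1:ℕ):ℤ) + 2*((0:ℕ):ℤ)) ((0:ℕ):ℤ) = 1 := by
    rw [show (n:ℤ) - ((h+1:ℕ):ℤ) + ((1:ℕ):ℤ) + 2*((0:ℕ):ℤ) = (n:ℤ) - h by push_cast; ring]
    exact ibinom_zero_of_nonneg (by omega)
  rw [Polynomial.coeff_C_mul, hscal]
  push_cast
  rw [one_mul, polyInner, finset_sum_coeff]
  have hzero : ∀ β : ℕ, β < h →
      (∑ α ∈ range (β+1), (ibinom (β:ℤ) (α:ℤ) : ℚ) *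
        ∑ i ∈ range 1, (ibinom (((0:ℕ):ℤ) - (i:ℤ) - ((h+1:ℕ):ℤ) + ((1:ℕ):ℤ) + (α:ℤ) + ((0:ℕ):ℤ) + (n:ℤ) - 2) ((n:ℤ) - 2) : ℚ)) = 0 := by
    intro β hβlt
    refine Finset.sum_eq_zero fun α hα => ?_
    have h1 : α ≤ β := Nat.lt_succ_iff.mp (mem_range.mp hα)
    have hlt : ((0:ℕ):ℤ) - ((0:ℕ):ℤ) - ((h+1:ℕ):ℤ) + ((1:ℕ):ℤ) + (α:ℤ) + ((0:ℕ):ℤ) + (n:ℤ) - 2 < (n:ℤ) - 2 := by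
      push_cast; omega
    rw [Finset.sum_range_one, ibinom_of_lt hlt]
    simp
  rw [Finset.sum_eq_single_of_mem (h+1-1-2*0) (by simp)]
  swap
  · intro β hβ hβh
    have hβlt : β < h := by have := mem_range.mp hβ; omega
    rw [hzero β hβlt, map_zero, mul_zero, Polynomial.coeff_zero]
  have hsh : (∑ α ∈ range ((h+1-1-2*0)+1), (ibinom (((h+1-1-2*0):ℕ):ℤ) (α:ℤ) : ℚ) *
      ∑ i ∈ range 1, (ibinom (((0:ℕ):ℤ) - (i:ℤ) - ((h+1:ℕ):ℤ) + ((1:ℕ):ℤ) + (α:ℤ) + ((0:ℕ):ℤ) + (n:ℤ) - 2) ((n:ℤ) - 2) : ℚ)) = 1 := by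
    have hsimp : h+1-1-2*0 = h := by omega
    rw [hsimp, Finset.sum_range_succ, Finset.sum_eq_zero (fun α hα => by
      have h1 : α < h := mem_range.mp hα
      have hlt : ((0:ℕ):ℤ) - ((0:ℕ):ℤ) - ((h+1:ℕ):ℤ) + ((1:ℕ):ℤ) + (α:ℤ) + ((0:ℕ):ℤ) + (n:ℤ) - 2 < (n:ℤ) - 2 := by
        push_cast; omega
      rw [Finset.sum_range_one, ibinom_of_lt hlt]
      simp)]
    rw [Finset.sum_range_one, ibinom_natCast, Nat.choose_self,
      show ((0:ℕ):ℤ) - ((0:ℕ):ℤ) - ((h+1:ℕ):ℤ) + ((1:ℕ):ℤ) + (h:ℤ) + ((0:ℕ):ℤ) + (n:ℤ) - 2 = (n:ℤ) - 2 by push_cast; ring,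
      show (n:ℤ) - 2 = ((n-2 : ℕ) : ℤ) by omega, ibinom_natCast, Nat.choose_self]
    norm_num
  rw [hsh]
  have hss : h+1-1-2*0 - (h+1-1-2*0) = 0 := by omega
  have hsimp : h+1-1-2*0 = h := by omega
  rw [hss, hsimp, map_one, mul_one, pow_zero, map_one, one_mul]
  have hp0 : pchd 0 Polynomial.X = 1 := by
    simp [pchd]
  rw [hp0, mul_one, pchd, Polynomial.coeff_C_mul, coeff_prod_linear]
  ring

lemma eval_sum_moments (N m : ℕ) (f : ℕ → ℚ)
    (hm : ∀ j < m, ∑ ℓ ∈ range N, (ℓ : ℚ)^j * f ℓ = 0)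
    (P : Polynomial ℚ) (hP : P.natDegree < m) :
    ∑ ℓ ∈ range N, P.eval (ℓ:ℚ) * f ℓ = 0 := by
  have hev : ∀ ℓ : ℕ, P.eval (ℓ:ℚ) = ∑ j ∈ range m, P.coeff j * (ℓ:ℚ)^j := fun ℓ =>
    Polynomial.eval_eq_sum_range' hP _
  simp only [hev, Finset.sum_mul]
  rw [Finset.sum_comm]
  refine Finset.sum_eq_zero fun j hj => ?_
  simp only [mul_assoc]
  rw [← Finset.mul_sum, hm j (mem_range.mp hj), mul_zero]

lemma support_vanish (N : ℕ) (f : ℕ → ℚ) (S : Finset ℕ) (_hSN : ∀ x ∈ S, x < N)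
    (hsupp : ∀ ℓ < N, ℓ ∉ S → f ℓ = 0)
    (hm : ∀ j < S.card, ∑ ℓ ∈ range N, (ℓ:ℚ)^j * f ℓ = 0) :
    ∀ ℓ < N, f ℓ = 0 := by
  intro x hx
  by_cases hxS : x ∈ S
  · have hinj : Set.InjOn (fun i : ℕ => (i:ℚ)) S :=
      Set.injOn_of_injective (fun a b hab => by exact_mod_cast hab)
    set P := Lagrange.basis S (fun i : ℕ => (i:ℚ)) x with hPdef
    have hcard : 1 ≤ S.card := Finset.card_pos.mpr ⟨x, hxS⟩
    have hdeg : P.natDegree < S.card := by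
      have := Lagrange.degree_basis hinj hxS
      have hnd : P.natDegree = S.card - 1 := natDegree_eq_of_degree_eq_some this
      omega
    have h0 := eval_sum_moments N S.card f hm P hdeg
    have hsum : ∑ ℓ ∈ range N, P.eval (ℓ:ℚ) * f ℓ = f x := by
      rw [Finset.sum_eq_single_of_mem x (mem_range.mpr hx)]
      · rw [show ((x:ℚ)) = (fun i : ℕ => (i:ℚ)) x by rfl,
          Lagrange.eval_basis_self hinj hxS, one_mul]
      · intro b hb hbx
        by_cases hbS : b ∈ S
        · rw [show ((b:ℚ)) = (fun i : ℕ => (i:ℚ)) b by rfl,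
            Lagrange.eval_basis_of_ne (Ne.symm hbx) hbS, zero_mul]
        · rw [hsupp b (mem_range.mp hb) hbS, mul_zero]
    rw [hsum] at h0
    exact h0
  · exact hsupp x hx hxS

lemma onenorm_eq_zero_iff {n : ℕ} {μ : Fin n → ℤ} : onenorm μ = 0 ↔ μ = 0 := by
  rw [onenorm, Finset.sum_eq_zero_iff]
  constructor
  · intro h; funext i
    simpa [Int.natAbs_eq_zero] using h i (mem_univ i)
  · rintro rfl i _; simp

lemma zcount_zero_eq {n : ℕ} : zcount (0 : Fin n → ℤ) = n := by
  simp [zcount]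

lemma eq_zero_of_zcount {n : ℕ} {μ : Fin n → ℤ} (h : zcount μ = n) : μ = 0 := by
  have huniv : (univ.filter fun i => μ i = 0) = univ :=
    Finset.eq_univ_of_card _ (by simpa [zcount, Fintype.card_fin] using h)
  funext i
  have := Finset.eq_univ_iff_forall.mp huniv i
  simpa using (Finset.mem_filter.mp this).2

lemma zcount_add_onenorm {n : ℕ} (μ : Fin n → ℤ) : n ≤ zcount μ + onenorm μ := by
  classical
  have h1 : (univ.filter fun i => ¬ (μ i = 0)).card ≤ onenorm μ := by
    rw [onenorm]
    calc (univ.filter fun i => ¬ (μ i = 0)).card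
        = ∑ _i ∈ univ.filter (fun i => ¬ (μ i = 0)), 1 := by simp
      _ ≤ ∑ i ∈ univ.filter (fun i => ¬ (μ i = 0)), (μ i).natAbs :=
          Finset.sum_le_sum fun i hi =>
            Int.natAbs_pos.mpr (Finset.mem_filter.mp hi).2
      _ ≤ ∑ i, (μ i).natAbs := Finset.sum_le_sum_of_subset (Finset.filter_subset _ _)
  have h2 := Finset.card_filter_add_card_filter_not (s := (univ : Finset (Fin n)))
    (p := fun i => μ i = 0)
  rw [Finset.card_univ, Fintype.card_fin] at h2
  rw [zcount]
  omega

lemma Ncard_eq_zero_of_add_lt {n : ℕ} (L : Set (Fin n → ℤ)) (k ℓ : ℕ) (h : ℓ + k < n) :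
    Ncard L k ℓ = 0 := by
  rw [Ncard, show {μ : Fin n → ℤ | μ ∈ L ∧ onenorm μ = k ∧ zcount μ = ℓ} = ∅ by
    ext μ
    simp only [Set.mem_setOf_eq, Set.mem_empty_iff_false, iff_false, not_and]
    intro _ hk hl
    have := zcount_add_onenorm μ
    omega]
  exact Set.ncard_empty _

lemma Ncard_top_eq_zero {n : ℕ} (L : Set (Fin n → ℤ)) (k : ℕ) (hk : 1 ≤ k) :
    Ncard L k n = 0 := by
  rw [Ncard, show {μ : Fin n → ℤ | μ ∈ L ∧ onenorm μ = k ∧ zcount μ = n} = ∅ by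
    ext μ
    simp only [Set.mem_setOf_eq, Set.mem_empty_iff_false, iff_false, not_and]
    intro _ hk2 hl
    rw [eq_zero_of_zcount hl] at hk2
    rw [onenorm_eq_zero_iff.mpr rfl] at hk2
    omega]
  exact Set.ncard_empty _

lemma Ncard_zero_eq {n : ℕ} (L : Set (Fin n → ℤ)) (h0 : (0 : Fin n → ℤ) ∈ L) (ℓ : ℕ) :
    Ncard L 0 ℓ = if ℓ = n then 1 else 0 := by
  rw [Ncard]
  split_ifs with hln
  · rw [hln, show {μ : Fin n → ℤ | μ ∈ L ∧ onenorm μ = 0 ∧ zcount μ = n} = {0} by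
      ext μ
      simp only [Set.mem_setOf_eq, Set.mem_singleton_iff]
      constructor
      · rintro ⟨-, h1, -⟩; exact onenorm_eq_zero_iff.mp h1
      · rintro rfl; exact ⟨h0, onenorm_eq_zero_iff.mpr rfl, zcount_zero_eq⟩]
    exact Set.ncard_singleton _
  · rw [show {μ : Fin n → ℤ | μ ∈ L ∧ onenorm μ = 0 ∧ zcount μ = ℓ} = ∅ by
      ext μ
      simp only [Set.mem_setOf_eq, Set.mem_empty_iff_false, iff_false, not_and]
      rintro - h1 h2
      rw [onenorm_eq_zero_iff.mp h1, zcount_zero_eq] at h2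
      exact hln h2.symm]
    exact Set.ncard_empty _

lemma Mcoef_rat {n : ℕ} (L : Set (Fin n → ℤ)) (k p : ℕ) :
    ((Mcoef L k p : ℤ) : ℚ) =
      ∑ r ∈ range ((k-1+p)/2+1), ∑ ℓ ∈ range (n+1),
        (polyW n p r).eval (ℓ:ℚ) * ((Ncard L (k-1+p-2*r) ℓ : ℕ) : ℚ) := by
  rw [Mcoef, Finset.sum_comm, Int.cast_sum]
  refine Finset.sum_congr rfl fun r hr => ?_
  rw [Int.cast_sum]
  refine Finset.sum_congr rfl fun ℓ hℓ => ?_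
  have hl : ℓ ≤ n := Nat.lt_succ_iff.mp (mem_range.mp hℓ)
  rw [Int.cast_mul, polyW_eval n p r ℓ hl, mul_comm]
  push_cast
  ring

end Stmt1Aux

/-- Corollary 2.4: the `p`-spectra agree for all `1 ≤ p ≤ p₀+1`
iff the moments of order `h ≤ p₀` of the counting functions agree. -/
theorem stmt1 {n : ℕ} (hn : 2 ≤ n) (L L' : AddSubgroup (Fin n → ℤ)) {p₀ : ℕ}
    (hp₀ : p₀ ≤ n - 1) :
    (∀ k p : ℕ, 1 ≤ k → 1 ≤ p → p ≤ p₀ + 1 →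
        Mcoef (L : Set (Fin n → ℤ)) k p = Mcoef (L' : Set (Fin n → ℤ)) k p) ↔
      (∀ k h : ℕ, h ≤ p₀ →
        ∑ ℓ ∈ range (n+1), (ℓ : ℤ)^h * (Ncard (L : Set (Fin n → ℤ)) k ℓ : ℤ) =
          ∑ ℓ ∈ range (n+1), (ℓ : ℤ)^h * (Ncard (L' : Set (Fin n → ℤ)) k ℓ : ℤ)) := by
  classical
  have h0L : (0 : Fin n → ℤ) ∈ (L : Set (Fin n → ℤ)) := L.zero_mem
  have h0L' : (0 : Fin n → ℤ) ∈ (L' : Set (Fin n → ℤ)) := L'.zero_mem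
  set d : ℕ → ℕ → ℚ := fun k ℓ =>
    ((Ncard (L : Set (Fin n → ℤ)) k ℓ : ℕ) : ℚ)
      - ((Ncard (L' : Set (Fin n → ℤ)) k ℓ : ℕ) : ℚ) with hd
  have hMdiff : ∀ k p : ℕ,
      (Mcoef (L : Set (Fin n → ℤ)) k p = Mcoef (L' : Set (Fin n → ℤ)) k p) ↔
      ((∑ r ∈ range ((k-1+p)/2+1), ∑ ℓ ∈ range (n+1),
        (Stmt1Aux.polyW n p r).eval (ℓ:ℚ) * d (k-1+p-2*r) ℓ) = 0) := by
    intro k p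
    have hshow : (∑ r ∈ range ((k-1+p)/2+1), ∑ ℓ ∈ range (n+1),
        (Stmt1Aux.polyW n p r).eval (ℓ:ℚ) * d (k-1+p-2*r) ℓ)
      = ((Mcoef (L : Set (Fin n → ℤ)) k p : ℚ)
          - (Mcoef (L' : Set (Fin n → ℤ)) k p : ℚ)) := by
      rw [Stmt1Aux.Mcoef_rat, Stmt1Aux.Mcoef_rat, ← Finset.sum_sub_distrib]
      refine Finset.sum_congr rfl fun r _ => ?_
      rw [← Finset.sum_sub_distrib]
      refine Finset.sum_congr rfl fun ℓ _ => ?_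
      simp only [hd]
      ring
    rw [hshow]
    constructor
    · intro hEq; rw [hEq]; ring
    · intro hEq
      have h2 : ((Mcoef (L : Set (Fin n → ℤ)) k p : ℤ) : ℚ)
          = ((Mcoef (L' : Set (Fin n → ℤ)) k p : ℤ) : ℚ) := by linarith
      exact_mod_cast h2
  have hvmom : ∀ k h : ℕ,
      ((∑ ℓ ∈ range (n+1), (ℓ:ℤ)^h * (Ncard (L : Set (Fin n → ℤ)) k ℓ : ℤ))
        = ∑ ℓ ∈ range (n+1), (ℓ:ℤ)^h * (Ncard (L' : Set (Fin n → ℤ)) k ℓ : ℤ)) ↔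
      ((∑ ℓ ∈ range (n+1), (ℓ:ℚ)^h * d k ℓ) = 0) := by
    intro k h
    have hshow : (∑ ℓ ∈ range (n+1), (ℓ:ℚ)^h * d k ℓ)
        = ((∑ ℓ ∈ range (n+1), (ℓ:ℤ)^h * (Ncard (L : Set (Fin n → ℤ)) k ℓ : ℤ) : ℤ) : ℚ)
          - ((∑ ℓ ∈ range (n+1), (ℓ:ℤ)^h * (Ncard (L' : Set (Fin n → ℤ)) k ℓ : ℤ) : ℤ) : ℚ) := by
      push_cast
      rw [← Finset.sum_sub_distrib]
      refine Finset.sum_congr rfl fun ℓ _ => ?_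
      simp only [hd]
      ring
    rw [hshow]
    constructor
    · intro hEq; rw [hEq]; ring
    · intro hEq
      have h2 : ((∑ ℓ ∈ range (n+1), (ℓ:ℤ)^h * (Ncard (L : Set (Fin n → ℤ)) k ℓ : ℤ) : ℤ) : ℚ)
          = ((∑ ℓ ∈ range (n+1), (ℓ:ℤ)^h * (Ncard (L' : Set (Fin n → ℤ)) k ℓ : ℤ) : ℤ) : ℚ) := by
        linarith
      exact_mod_cast h2
  constructor
  · intro hA
    have key : ∀ h : ℕ, h ≤ p₀ → ∀ k : ℕ,
        (∑ ℓ ∈ range (n+1), (ℓ:ℚ)^h * d k ℓ) = 0 := by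
      intro h
      induction h using Nat.strong_induction_on with
      | _ h IH =>
        intro hhp₀
        have hd0 : ∀ ℓ, d 0 ℓ = 0 := fun ℓ => by
          simp only [hd]
          rw [Stmt1Aux.Ncard_zero_eq _ h0L ℓ, Stmt1Aux.Ncard_zero_eq _ h0L' ℓ, sub_self]
        have hsmall : ∀ k, k ≤ h → ∀ ℓ, ℓ < n+1 → d k ℓ = 0 := by
          intro k hk
          rcases Nat.eq_zero_or_pos k with rfl | hk1
          · intro ℓ _; exact hd0 ℓ
          · refine Stmt1Aux.support_vanish (n+1) (d k) (Icc (n-k) (n-1)) ?_ ?_ ?_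
            · intro x hx; have := (mem_Icc.mp hx).2; omega
            · intro ℓ hℓ hnot
              rw [mem_Icc, not_and_or] at hnot
              have hcase : ℓ + k < n ∨ ℓ = n := by omega
              rcases hcase with hc | hc
              · simp only [hd]
                rw [Stmt1Aux.Ncard_eq_zero_of_add_lt _ k ℓ hc,
                  Stmt1Aux.Ncard_eq_zero_of_add_lt _ k ℓ hc, sub_self]
              · subst hc
                simp only [hd]
                rw [Stmt1Aux.Ncard_top_eq_zero _ k hk1,
                  Stmt1Aux.Ncard_top_eq_zero _ k hk1, sub_self]
            · intro j hj
              have hcard : (Icc (n-k) (n-1)).card = k := by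
                rw [Nat.card_Icc]; omega
              rw [hcard] at hj
              exact IH j (by omega) (by omega) k
        have hrec : ∀ k, 1 ≤ k → ∑ r ∈ range ((k+h)/2+1),
            (Stmt1Aux.polyW n (h+1) r).coeff h *
              (∑ ℓ ∈ range (n+1), (ℓ:ℚ)^h * d (k+h-2*r) ℓ) = 0 := by
          intro k hk1
          have hM := (hMdiff k (h+1)).mp (hA k (h+1) hk1 (by omega) (by omega))
          have harg : k - 1 + (h+1) = k + h := by omega
          rw [harg] at hM
          have inner : ∀ r : ℕ,
              (∑ ℓ ∈ range (n+1), (Stmt1Aux.polyW n (h+1) r).eval (ℓ:ℚ) * d (k+h-2*r) ℓ)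
                = (Stmt1Aux.polyW n (h+1) r).coeff h *
                    (∑ ℓ ∈ range (n+1), (ℓ:ℚ)^h * d (k+h-2*r) ℓ) := by
            intro r
            have hdeg : (Stmt1Aux.polyW n (h+1) r).natDegree < h+1 :=
              lt_of_le_of_lt (Stmt1Aux.polyW_natDegree n (h+1) r) (by omega)
            have hev : ∀ ℓ : ℕ, (Stmt1Aux.polyW n (h+1) r).eval (ℓ:ℚ)
                = ∑ j ∈ range (h+1), (Stmt1Aux.polyW n (h+1) r).coeff j * (ℓ:ℚ)^j :=
              fun ℓ => Polynomial.eval_eq_sum_range' hdeg _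
            calc (∑ ℓ ∈ range (n+1), (Stmt1Aux.polyW n (h+1) r).eval (ℓ:ℚ) * d (k+h-2*r) ℓ)
                = ∑ ℓ ∈ range (n+1), ∑ j ∈ range (h+1),
                    (Stmt1Aux.polyW n (h+1) r).coeff j * (ℓ:ℚ)^j * d (k+h-2*r) ℓ := by
                  refine Finset.sum_congr rfl fun ℓ _ => ?_
                  rw [hev ℓ, Finset.sum_mul]
              _ = ∑ j ∈ range (h+1), ∑ ℓ ∈ range (n+1),
                    (Stmt1Aux.polyW n (h+1) r).coeff j * (ℓ:ℚ)^j * d (k+h-2*r) ℓ :=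
                  Finset.sum_comm
              _ = ∑ j ∈ range (h+1), (Stmt1Aux.polyW n (h+1) r).coeff j *
                    ∑ ℓ ∈ range (n+1), (ℓ:ℚ)^j * d (k+h-2*r) ℓ := by
                  refine Finset.sum_congr rfl fun j _ => ?_
                  rw [Finset.mul_sum]
                  exact Finset.sum_congr rfl fun ℓ _ => by ring
              _ = (Stmt1Aux.polyW n (h+1) r).coeff h *
                    (∑ ℓ ∈ range (n+1), (ℓ:ℚ)^h * d (k+h-2*r) ℓ) := by
                  rw [Finset.sum_range_succ, Finset.sum_eq_zero (fun j hj => by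
                    have hjh := mem_range.mp hj
                    rw [IH j hjh (by omega) (k+h-2*r), mul_zero]), zero_add]
          calc ∑ r ∈ range ((k+h)/2+1), (Stmt1Aux.polyW n (h+1) r).coeff h *
                (∑ ℓ ∈ range (n+1), (ℓ:ℚ)^h * d (k+h-2*r) ℓ)
              = ∑ r ∈ range ((k+h)/2+1), ∑ ℓ ∈ range (n+1),
                (Stmt1Aux.polyW n (h+1) r).eval (ℓ:ℚ) * d (k+h-2*r) ℓ :=
                Finset.sum_congr rfl fun r _ => (inner r).symm
            _ = 0 := hM
        intro k
        induction k using Nat.strong_induction_on with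
        | _ K IHK =>
          rcases le_or_gt K h with hKh | hKh
          · exact Finset.sum_eq_zero fun ℓ hℓ => by
              rw [hsmall K hKh ℓ (mem_range.mp hℓ), mul_zero]
          · have hk01 : 1 ≤ K - h := by omega
            have hthis := hrec (K-h) hk01
            rw [show K - h + h = K by omega] at hthis
            have hsingle : (∑ r ∈ range (K/2+1), (Stmt1Aux.polyW n (h+1) r).coeff h *
                (∑ ℓ ∈ range (n+1), (ℓ:ℚ)^h * d (K-2*r) ℓ))
                = (Stmt1Aux.polyW n (h+1) 0).coeff h *
                    (∑ ℓ ∈ range (n+1), (ℓ:ℚ)^h * d (K-2*0) ℓ) := by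
              refine Finset.sum_eq_single_of_mem 0 (by simp) ?_
              intro r hr hr0
              have hrK : 2*r ≤ K := by
                have := mem_range.mp hr
                omega
              rw [IHK (K-2*r) (by omega), mul_zero]
            rw [hsingle, show K-2*0 = K by omega] at hthis
            rw [Stmt1Aux.polyW_coeff n h hn (by omega)] at hthis
            have hne : ((-1:ℚ)^h * ((h.factorial : ℚ))⁻¹) ≠ 0 :=
              mul_ne_zero (pow_ne_zero _ (by norm_num))
                (inv_ne_zero (Nat.cast_ne_zero.mpr h.factorial_ne_zero))
            exact (mul_eq_zero.mp hthis).resolve_left hne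
    intro k h hh
    exact (hvmom k h).mpr (key h hh k)
  · intro hB k p hk1 hp1 hpp₀
    refine (hMdiff k p).mpr ?_
    refine Finset.sum_eq_zero fun r hr => ?_
    refine Stmt1Aux.eval_sum_moments (n+1) (p₀+1) (d (k-1+p-2*r)) ?_ _ ?_
    · intro j hj
      exact (hvmom (k-1+p-2*r) j).mp (hB (k-1+p-2*r) j (by omega))
    · exact lt_of_le_of_lt (Stmt1Aux.polyW_natDegree n p r) (by omega)
end
end

section
/- Let n ≥ 1, let q be a positive integer, and let 𝓛 ⊆ ℤⁿ be a q-periodic subset. Then for every 0 ≤ ℓ ≤ n the following identity holds in ℤ[[z]]: (1−z^q)^{n−ℓ} · ϑ_𝓛^{(ℓ)}(z) = Σ_{s=0}^{n−ℓ} 2ˢ binom(ℓ+s, s) z^{sq} Φ_𝓛^{(ℓ+s)}(z). (This is Theorem 2.5, stated for the congruence lattice 𝓛 = 𝓛_Γ of a finite subgroup Γ of the maximal torus with q(Γ) = q, which is a q-periodic subgroup of ℤⁿ.) -/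
noncomputable section

open Finset PowerSeries

namespace ThetaAux


/-! ### one-dimensional reduction -/

def redq (q : ℕ) (a : ℤ) : ℤ := a.sign * ((a.natAbs % q : ℕ) : ℤ)
def quoq (q : ℕ) (a : ℤ) : ℤ := a.sign * ((a.natAbs / q : ℕ) : ℤ)

lemma redq_add (q : ℕ) (a : ℤ) : redq q a + (q : ℤ) * quoq q a = a := by
  have h : ((a.natAbs % q : ℕ) : ℤ) + (q : ℤ) * ((a.natAbs / q : ℕ) : ℤ) = (a.natAbs : ℤ) := by
    exact_mod_cast Nat.mod_add_div a.natAbs q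
  have h2 : a.sign * (a.natAbs : ℤ) = a := Int.sign_mul_natAbs a
  unfold redq quoq
  linear_combination a.sign * h + h2

lemma natAbs_redq (q : ℕ) (a : ℤ) : (redq q a).natAbs = a.natAbs % q := by
  rcases eq_or_ne a 0 with rfl | ha
  · simp [redq]
  · rw [redq, Int.natAbs_mul, Int.natAbs_sign_of_ne_zero ha, one_mul, Int.natAbs_natCast]

/-! ### norms of cons -/

lemma onenorm_cons {n : ℕ} (a : ℤ) (μ : Fin n → ℤ) :
    onenorm (Fin.cons a μ) = a.natAbs + onenorm μ := by
  unfold onenorm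
  rw [Fin.sum_univ_succ]
  simp

lemma zcount_eq_sum {n : ℕ} (μ : Fin n → ℤ) :
    zcount μ = ∑ i, if μ i = 0 then 1 else 0 := by
  unfold zcount; rw [Finset.card_filter]

lemma zcount_cons {n : ℕ} (a : ℤ) (μ : Fin n → ℤ) :
    zcount (Fin.cons a μ) = (if a = 0 then 1 else 0) + zcount μ := by
  rw [zcount_eq_sum, zcount_eq_sum, Fin.sum_univ_succ]
  simp

lemma zcount_le {n : ℕ} (μ : Fin n → ℤ) : zcount μ ≤ n := by
  unfold zcount
  simpa using Finset.card_filter_le univ (fun i => μ i = 0)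

lemma abs_le_onenorm {n : ℕ} (μ : Fin n → ℤ) (i : Fin n) : (μ i).natAbs ≤ onenorm μ := by
  unfold onenorm
  exact Finset.single_le_sum (f := fun j => (μ j).natAbs) (fun j _ => Nat.zero_le _) (mem_univ i)

lemma finite_onenorm {n : ℕ} (k : ℕ) : {μ : Fin n → ℤ | onenorm μ = k}.Finite := by
  classical
  apply Set.Finite.subset
    (Finset.finite_toSet (Fintype.piFinset fun _ : Fin n => Finset.Icc (-(k:ℤ)) (k:ℤ)))
  intro μ hμ
  simp only [Set.mem_setOf_eq] at hμ
  simp only [Finset.mem_coe, Fintype.mem_piFinset, Finset.mem_Icc]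
  intro i
  have := abs_le_onenorm μ i
  omega




variable {q : ℕ}

/-! ### slices -/

def sl {n : ℕ} (L : Set (Fin (n+1) → ℤ)) (a : ℤ) : Set (Fin n → ℤ) := {μ | Fin.cons a μ ∈ L}

lemma cons_add_cons {n : ℕ} (a t : ℤ) (μ ν : Fin n → ℤ) (c : ℤ) :
    (Fin.cons a μ + c • Fin.cons t ν : Fin (n+1) → ℤ) = Fin.cons (a + c * t) (μ + c • ν) := by
  funext i
  refine Fin.cases ?_ (fun j => ?_) i <;> simp [smul_eq_mul]

lemma qPeriodic_sl {n : ℕ} {L : Set (Fin (n+1) → ℤ)} (hL : qPeriodic q L) (a : ℤ) :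
    qPeriodic q (sl L a) := by
  intro μ ν
  have h := hL (Fin.cons a μ) (Fin.cons 0 ν)
  rw [cons_add_cons] at h
  simpa [sl, Set.mem_setOf_eq] using h

lemma sl_shift {n : ℕ} {L : Set (Fin (n+1) → ℤ)} (hL : qPeriodic q L) (a t : ℤ) :
    sl L (a + (q : ℤ) * t) = sl L a := by
  ext μ
  have h := hL (Fin.cons a μ) (Fin.cons t 0)
  rw [cons_add_cons] at h
  simp only [smul_zero, add_zero] at h
  simp only [sl, Set.mem_setOf_eq]
  exact h.symm

lemma sl_redq {n : ℕ} {L : Set (Fin (n+1) → ℤ)} (hL : qPeriodic q L) (a : ℤ) :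
    sl L a = sl L (redq q a) := by
  conv_lhs => rw [← redq_add q a]
  exact sl_shift hL _ _

/-! ### master counting -/

def NB {n : ℕ} (B : ℤ → Prop) (L : Set (Fin n → ℤ)) (k ℓ : ℕ) : ℕ :=
  {μ : Fin n → ℤ | (∀ i, B (μ i)) ∧ μ ∈ L ∧ onenorm μ = k ∧ zcount μ = ℓ}.ncard

lemma NB_true {n : ℕ} (L : Set (Fin n → ℤ)) (k ℓ : ℕ) :
    NB (fun _ => True) L k ℓ = Ncard L k ℓ := by
  unfold NB Ncard
  congr 1
  ext μ
  simp

lemma NB_red {n : ℕ} (L : Set (Fin n → ℤ)) (k ℓ : ℕ) :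
    NB (fun x => |x| < (q : ℤ)) L k ℓ = NcardRed L q k ℓ := rfl

lemma NB_decomp {n : ℕ} (B : ℤ → Prop) (L : Set (Fin (n+1) → ℤ)) (k ℓ : ℕ)
    (t : Finset ℤ) (ht : ∀ a : ℤ, B a → a.natAbs ≤ k → a ∈ t) :
    NB B L k ℓ = ∑ a ∈ t,
      {μ : Fin (n+1) → ℤ | ((∀ i, B (μ i)) ∧ μ ∈ L ∧ onenorm μ = k ∧ zcount μ = ℓ) ∧ μ 0 = a}.ncard := by
  classical
  have hfin : {μ : Fin (n+1) → ℤ | (∀ i, B (μ i)) ∧ μ ∈ L ∧ onenorm μ = k ∧ zcount μ = ℓ}.Finite :=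
    (finite_onenorm k).subset (fun μ h => h.2.2.1)
  have h1 : NB B L k ℓ = hfin.toFinset.card := by
    rw [NB, ← Set.ncard_coe_finset, Set.Finite.coe_toFinset]
  rw [h1, Finset.card_eq_sum_card_fiberwise (f := fun μ => μ 0) (t := t)
    (fun μ hμ => by
      rw [Finset.mem_coe, Set.Finite.mem_toFinset] at hμ
      exact ht (μ 0) (hμ.1 0) (le_trans (abs_le_onenorm μ 0) (le_of_eq hμ.2.2.1)))]
  refine Finset.sum_congr rfl fun a _ => ?_
  have h2 : {μ : Fin (n+1) → ℤ | ((∀ i, B (μ i)) ∧ μ ∈ L ∧ onenorm μ = k ∧ zcount μ = ℓ) ∧ μ 0 = a}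
      = ↑(hfin.toFinset.filter fun μ => μ 0 = a) := by
    ext μ
    simp [Set.Finite.mem_toFinset, and_assoc]
  rw [h2, Set.ncard_coe_finset]

lemma fiber_eq {n : ℕ} (B : ℤ → Prop) (L : Set (Fin (n+1) → ℤ)) (k ℓ : ℕ) (a : ℤ)
    (hB : B a) (hak : a.natAbs ≤ k) (hz : a = 0 → 1 ≤ ℓ) :
    {μ : Fin (n+1) → ℤ | ((∀ i, B (μ i)) ∧ μ ∈ L ∧ onenorm μ = k ∧ zcount μ = ℓ) ∧ μ 0 = a}.ncard
      = NB B (sl L a) (k - a.natAbs) (if a = 0 then ℓ - 1 else ℓ) := by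
  classical
  rw [NB]
  have himg : (fun μ : Fin (n+1) → ℤ => Fin.tail μ) ''
        {μ : Fin (n+1) → ℤ | ((∀ i, B (μ i)) ∧ μ ∈ L ∧ onenorm μ = k ∧ zcount μ = ℓ) ∧ μ 0 = a}
      = {ν : Fin n → ℤ | (∀ i, B (ν i)) ∧ ν ∈ sl L a ∧ onenorm ν = k - a.natAbs
          ∧ zcount ν = (if a = 0 then ℓ - 1 else ℓ)} := by
    ext ν
    constructor
    · rintro ⟨μ, ⟨⟨hBμ, hLμ, hno, hzc⟩, h0⟩, rfl⟩
      dsimp only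
      have hμ : μ = Fin.cons a (Fin.tail μ) := by rw [← h0, Fin.cons_self_tail]
      rw [hμ, onenorm_cons] at hno
      rw [hμ, zcount_cons] at hzc
      refine ⟨fun i => hBμ i.succ, ?_, by omega, ?_⟩
      · show Fin.cons a (Fin.tail μ) ∈ L
        rw [← hμ]; exact hLμ
      · split_ifs at hzc ⊢ <;> omega
    · rintro ⟨hBν, hLν, hno, hzc⟩
      refine ⟨Fin.cons a ν, ⟨⟨?_, hLν, ?_, ?_⟩, ?_⟩, ?_⟩
      · intro i
        refine Fin.cases ?_ (fun j => ?_) i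
        · simpa using hB
        · simpa using hBν j
      · rw [onenorm_cons]; omega
      · rw [zcount_cons]
        split_ifs at hzc ⊢ with h
        · have := hz h; omega
        · omega
      · simp
      · simp
  have hinj : Set.InjOn (fun μ : Fin (n+1) → ℤ => Fin.tail μ)
      {μ : Fin (n+1) → ℤ | ((∀ i, B (μ i)) ∧ μ ∈ L ∧ onenorm μ = k ∧ zcount μ = ℓ) ∧ μ 0 = a} := by
    intro μ1 h1 μ2 h2 he
    have e1 : μ1 = Fin.cons a (Fin.tail μ1) := by rw [← h1.2, Fin.cons_self_tail]
    have e2 : μ2 = Fin.cons a (Fin.tail μ2) := by rw [← h2.2, Fin.cons_self_tail]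
    rw [e1, e2]
    simp only at he
    rw [he]
  rw [← himg, Set.ncard_image_of_injOn hinj]

lemma fiber_empty_large {n : ℕ} (B : ℤ → Prop) (L : Set (Fin (n+1) → ℤ)) (k ℓ : ℕ) (a : ℤ)
    (h : k < a.natAbs) :
    {μ : Fin (n+1) → ℤ | ((∀ i, B (μ i)) ∧ μ ∈ L ∧ onenorm μ = k ∧ zcount μ = ℓ) ∧ μ 0 = a}.ncard = 0 := by
  have he : {μ : Fin (n+1) → ℤ | ((∀ i, B (μ i)) ∧ μ ∈ L ∧ onenorm μ = k ∧ zcount μ = ℓ) ∧ μ 0 = a} = ∅ := by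
    ext μ
    simp only [Set.mem_setOf_eq, Set.mem_empty_iff_false, iff_false, not_and]
    rintro ⟨_, _, hno, _⟩ h0
    have := abs_le_onenorm μ 0
    rw [h0, hno] at this
    omega
  rw [he, Set.ncard_empty]

lemma fiber_empty_zero {n : ℕ} (B : ℤ → Prop) (L : Set (Fin (n+1) → ℤ)) (k : ℕ) :
    {μ : Fin (n+1) → ℤ | ((∀ i, B (μ i)) ∧ μ ∈ L ∧ onenorm μ = k ∧ zcount μ = 0) ∧ μ 0 = 0}.ncard = 0 := by
  have he : {μ : Fin (n+1) → ℤ | ((∀ i, B (μ i)) ∧ μ ∈ L ∧ onenorm μ = k ∧ zcount μ = 0) ∧ μ 0 = 0} = ∅ := by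
    ext μ
    simp only [Set.mem_setOf_eq, Set.mem_empty_iff_false, iff_false, not_and]
    rintro ⟨_, _, _, hzc⟩ h0
    have hmem : (0 : Fin (n+1)) ∈ univ.filter (fun i => μ i = 0) :=
      Finset.mem_filter.mpr ⟨mem_univ _, h0⟩
    have := Finset.card_pos.mpr ⟨_, hmem⟩
    rw [zcount] at hzc
    omega
  rw [he, Set.ncard_empty]



def RBfull (q : ℕ) : Finset ℤ := Finset.Icc (-(q:ℤ)+1) ((q:ℤ)-1)

lemma mem_RBfull {r : ℤ} : r ∈ RBfull q ↔ r.natAbs < q := by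
  simp only [RBfull, Finset.mem_Icc]
  omega

lemma Ncard_slice {n : ℕ} (L : Set (Fin (n+1) → ℤ)) (k ℓ : ℕ) :
    Ncard L k ℓ = (if ℓ = 0 then 0 else Ncard (sl L 0) k (ℓ - 1))
      + ∑ a ∈ (Finset.Icc (-(k:ℤ)) (k:ℤ)).erase 0, Ncard (sl L a) (k - a.natAbs) ℓ := by
  classical
  rw [← NB_true, NB_decomp (fun _ => True) L k ℓ (Finset.Icc (-(k:ℤ)) (k:ℤ))
    (fun a _ ha => by rw [Finset.mem_Icc]; omega)]
  rw [← Finset.add_sum_erase _ _ (show (0:ℤ) ∈ Finset.Icc (-(k:ℤ)) (k:ℤ) by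
    rw [Finset.mem_Icc]; omega)]
  congr 1
  · rcases eq_or_ne ℓ 0 with rfl | hℓ
    · rw [if_pos rfl]
      exact fiber_empty_zero (fun _ => True) L k
    · rw [if_neg hℓ, fiber_eq (fun _ => True) L k ℓ 0 trivial (by simp) (fun _ => by omega)]
      simp only [Int.natAbs_zero, Nat.sub_zero, if_pos rfl]
      exact NB_true _ _ _
  · refine Finset.sum_congr rfl fun a ha => ?_
    obtain ⟨ha0, haIcc⟩ := Finset.mem_erase.mp ha
    rw [Finset.mem_Icc] at haIcc
    rw [fiber_eq (fun _ => True) L k ℓ a trivial (by omega) (fun h => absurd h ha0),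
      if_neg ha0]
    exact NB_true _ _ _

lemma NcardRed_slice (hq : 0 < q) {n : ℕ} (L : Set (Fin (n+1) → ℤ)) (k m : ℕ) :
    NcardRed L q k m = (if m = 0 then 0 else NcardRed (sl L 0) q k (m - 1))
      + ∑ r ∈ (RBfull q).erase 0,
          (if r.natAbs ≤ k then NcardRed (sl L r) q (k - r.natAbs) m else 0) := by
  classical
  rw [← NB_red, NB_decomp (fun x => |x| < (q:ℤ)) L k m (RBfull q)
    (fun a haB _ => by
      simp only [Int.abs_eq_natAbs] at haB
      rw [mem_RBfull]
      omega)]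
  rw [← Finset.add_sum_erase _ _ (show (0:ℤ) ∈ RBfull q by rw [mem_RBfull]; simpa using hq)]
  congr 1
  · rcases eq_or_ne m 0 with rfl | hm
    · rw [if_pos rfl]
      exact fiber_empty_zero (fun x => |x| < (q:ℤ)) L k
    · rw [if_neg hm, fiber_eq (fun x => |x| < (q:ℤ)) L k m 0 (by show |(0:ℤ)| < (q:ℤ); rw [abs_zero]; exact_mod_cast hq) (by simp)
        (fun _ => by omega)]
      simp only [Int.natAbs_zero, Nat.sub_zero, if_pos rfl]
      exact NB_red _ _ _
  · refine Finset.sum_congr rfl fun r hr => ?_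
    obtain ⟨hr0, hrRB⟩ := Finset.mem_erase.mp hr
    rw [mem_RBfull] at hrRB
    rcases le_or_gt r.natAbs k with hrk | hrk
    · rw [if_pos hrk, fiber_eq (fun x => |x| < (q:ℤ)) L k m r (by show |r| < (q:ℤ); rw [Int.abs_eq_natAbs]; exact_mod_cast hrRB) hrk
        (fun h => absurd h hr0), if_neg hr0]
      exact NB_red _ _ _
    · rw [if_neg (by omega)]
      exact fiber_empty_large (fun x => |x| < (q:ℤ)) L k m r hrk

/-! ### the geometric series -/

def Sq (q : ℕ) : PowerSeries ℤ := PowerSeries.mk fun c => if c % q = 0 then 1 else 0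

lemma sub_mod_self (hqc : q ≤ c) : (c - q) % q = c % q := by
  conv_rhs => rw [← Nat.sub_add_cancel hqc]
  rw [Nat.add_mod_right]

lemma one_sub_X_pow_mul_Sq (hq : 0 < q) : (1 - (X : PowerSeries ℤ)^q) * Sq q = 1 := by
  ext k
  rw [sub_mul, one_mul, map_sub, mul_comm ((X : PowerSeries ℤ)^q), coeff_mul_X_pow']
  simp only [Sq, coeff_mk, coeff_one]
  rcases eq_or_ne k 0 with rfl | hk
  · rw [if_pos (Nat.zero_mod q), if_neg (by omega), if_pos rfl]
    ring
  · rw [if_neg hk]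
    by_cases hkq : k % q = 0
    · have hqk : q ≤ k := Nat.le_of_dvd (Nat.pos_of_ne_zero hk) (Nat.dvd_of_mod_eq_zero hkq)
      rw [if_pos hkq, if_pos hqk, if_pos (by rw [sub_mod_self hqk]; exact hkq)]
      ring
    · rw [if_neg hkq]
      by_cases hqk : q ≤ k
      · rw [if_pos hqk, if_neg (by rw [sub_mod_self hqk]; exact hkq)]
        ring
      · rw [if_neg hqk]
        ring

def gq (q : ℕ) (r : ℤ) : PowerSeries ℤ :=
  (if r = 0 then C (R := ℤ) 2 * (X : PowerSeries ℤ)^q else (X : PowerSeries ℤ)^(r.natAbs)) * Sq q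

def gcoefN (q : ℕ) (r : ℤ) (c : ℕ) : ℕ :=
  if c % q = r.natAbs ∧ c ≠ 0 then (if r = 0 then 2 else 1) else 0

lemma gkey' (hq : 0 < q) {b c : ℕ} (hb : b < q) (hb0 : b ≠ 0) :
    (b ≤ c ∧ (c - b) % q = 0) ↔ c % q = b := by
  constructor
  · rintro ⟨h1, h2⟩
    obtain ⟨t, ht⟩ := Nat.dvd_of_mod_eq_zero h2
    have hc : c = q * t + b := by omega
    rw [hc, Nat.mul_add_mod, Nat.mod_eq_of_lt hb]
  · intro h1
    have hle : b ≤ c := h1 ▸ Nat.mod_le c q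
    have := Nat.div_add_mod c q
    have hsub : c - b = q * (c / q) := by omega
    rw [hsub, Nat.mul_mod_right]
    exact ⟨hle, rfl⟩

lemma gkey0 (hq : 0 < q) {c : ℕ} :
    (q ≤ c ∧ (c - q) % q = 0) ↔ (c % q = 0 ∧ c ≠ 0) := by
  constructor
  · rintro ⟨h1, h2⟩
    rw [sub_mod_self h1] at h2
    exact ⟨h2, by omega⟩
  · rintro ⟨h1, h2⟩
    have hqk : q ≤ c := Nat.le_of_dvd (Nat.pos_of_ne_zero h2) (Nat.dvd_of_mod_eq_zero h1)
    exact ⟨hqk, by rw [sub_mod_self hqk]; exact h1⟩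

lemma coeff_gq (hq : 0 < q) (r : ℤ) (hr : r.natAbs < q) (c : ℕ) :
    coeff (R := ℤ) c (gq q r) = (gcoefN q r c : ℤ) := by
  unfold gq gcoefN
  rcases eq_or_ne r 0 with rfl | hr0
  · rw [if_pos rfl]
    have h1 : C (R := ℤ) 2 * (X : PowerSeries ℤ)^q * Sq q = C (R := ℤ) 2 * (Sq q * (X : PowerSeries ℤ)^q) := by
      ring
    rw [h1, coeff_C_mul, coeff_mul_X_pow']
    simp only [Int.natAbs_zero, if_pos rfl, Sq, coeff_mk]
    by_cases h : c % q = 0 ∧ c ≠ 0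
    · obtain ⟨hA, hB⟩ := gkey0 hq (c := c) |>.mpr h
      rw [if_pos hA, if_pos hB, if_pos h]
      norm_num
    · rw [if_neg h]
      by_cases hA : q ≤ c
      · have hB : ¬ (c - q) % q = 0 := fun hB => h (gkey0 hq |>.mp ⟨hA, hB⟩)
        rw [if_pos hA, if_neg hB]
        norm_num
      · rw [if_neg hA]
        norm_num
  · rw [if_neg hr0, mul_comm, coeff_mul_X_pow']
    have hrn : r.natAbs ≠ 0 := Int.natAbs_ne_zero.mpr hr0
    simp only [Sq, coeff_mk, if_neg hr0]
    by_cases h : c % q = r.natAbs ∧ c ≠ 0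
    · obtain ⟨hA, hB⟩ := (gkey' hq hr hrn).mpr h.1
      rw [if_pos hA, if_pos hB, if_pos h]
      norm_num
    · have h' : ¬ (c % q = r.natAbs) := by
        intro hc
        refine h ⟨hc, fun hc0 => ?_⟩
        rw [hc0, Nat.zero_mod] at hc
        exact hrn hc.symm
      rw [if_neg h]
      by_cases hA : r.natAbs ≤ c
      · have hB : ¬ (c - r.natAbs) % q = 0 := fun hB => h' ((gkey' hq hr hrn).mp ⟨hA, hB⟩)
        rw [if_pos hA, if_neg hB]
        norm_num
      · rw [if_neg hA]
        norm_num



lemma redq_natCast {c : ℕ} (hc : c ≠ 0) : redq q (c : ℤ) = ((c % q : ℕ) : ℤ) := by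
  rw [redq, Int.natAbs_natCast,
    Int.sign_eq_one_iff_pos.mpr (by exact_mod_cast Nat.pos_of_ne_zero hc), one_mul]

lemma redq_neg (a : ℤ) : redq q (-a) = - redq q a := by
  rw [redq, redq, Int.sign_neg, Int.natAbs_neg]
  ring

lemma card_fiber (hq : 0 < q) (k : ℕ) (r : ℤ) (c : ℕ) (hc : c ≤ k) :
    (((Finset.Icc (-(k:ℤ)) (k:ℤ)).erase 0).filter
        (fun a => (redq q a, a.natAbs) = (r, c))).card = gcoefN q r c := by
  classical
  unfold gcoefN
  by_cases h : c % q = r.natAbs ∧ c ≠ 0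
  · obtain ⟨h1, h2⟩ := h
    rcases eq_or_ne r 0 with rfl | hr0
    · rw [if_pos ⟨h1, h2⟩, if_pos rfl]
      rw [Int.natAbs_zero] at h1
      have hset : (((Finset.Icc (-(k:ℤ)) (k:ℤ)).erase 0).filter
          (fun a => (redq q a, a.natAbs) = ((0:ℤ), c))) = {(c:ℤ), -(c:ℤ)} := by
        ext a
        simp only [Finset.mem_filter, Finset.mem_erase, Finset.mem_Icc, Finset.mem_insert,
          Finset.mem_singleton, Prod.mk.injEq]
        constructor
        · rintro ⟨⟨_, _, _⟩, _, habs⟩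
          rcases Int.natAbs_eq a with he | he
          · left; rw [he, habs]
          · right; rw [he, habs]
        · rintro (rfl | rfl)
          · refine ⟨⟨by exact_mod_cast h2, by omega, by omega⟩, ?_, Int.natAbs_natCast c⟩
            rw [redq_natCast h2, h1, Nat.cast_zero]
          · refine ⟨⟨by simp; omega, by omega, by omega⟩, ?_, by simp⟩
            rw [redq_neg, redq_natCast h2, h1, Nat.cast_zero, neg_zero]
      rw [hset, Finset.card_insert_of_notMem (by simp only [Finset.mem_singleton]; omega),
        Finset.card_singleton]
    · rw [if_pos ⟨h1, h2⟩, if_neg hr0]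
      have hset : (((Finset.Icc (-(k:ℤ)) (k:ℤ)).erase 0).filter
          (fun a => (redq q a, a.natAbs) = (r, c))) = {r.sign * (c:ℤ)} := by
        ext a
        simp only [Finset.mem_filter, Finset.mem_erase, Finset.mem_Icc, Finset.mem_singleton,
          Prod.mk.injEq]
        constructor
        · rintro ⟨⟨ha0, _, _⟩, hred, habs⟩
          rcases Int.natAbs_eq a with he | he
          · -- a = ↑c, hence r = ↑(r.natAbs) > 0
            rw [habs] at he
            rw [he, redq_natCast h2, h1] at hred
            have hrpos : 0 < r := by omega
            rw [he, Int.sign_eq_one_iff_pos.mpr hrpos, one_mul]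
          · rw [habs] at he
            rw [he, redq_neg, redq_natCast h2, h1] at hred
            have hrneg : r < 0 := by omega
            rw [he, Int.sign_eq_neg_one_iff_neg.mpr hrneg]
            ring
        · rintro rfl
          rcases lt_trichotomy r 0 with hneg | hzero | hpos
          · rw [Int.sign_eq_neg_one_iff_neg.mpr hneg]
            have he : (-1 : ℤ) * (c:ℤ) = -(c:ℤ) := by ring
            rw [he, redq_neg, redq_natCast h2, h1, Int.natAbs_neg, Int.natAbs_natCast]
            refine ⟨⟨by omega, by omega, by omega⟩, by omega, rfl⟩
          · exact absurd hzero hr0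
          · rw [Int.sign_eq_one_iff_pos.mpr hpos, one_mul, redq_natCast h2, h1,
              Int.natAbs_natCast]
            refine ⟨⟨by omega, by omega, by omega⟩, by omega, rfl⟩
      rw [hset, Finset.card_singleton]
  · rw [if_neg h, Finset.card_eq_zero, Finset.filter_eq_empty_iff]
    intro a ha
    obtain ⟨ha0, haIcc⟩ := Finset.mem_erase.mp ha
    simp only [Prod.mk.injEq, not_and]
    intro hred habs
    refine h ⟨?_, by omega⟩
    rw [← habs, ← natAbs_redq q a, hred]

lemma Ncard_slice' (hq : 0 < q) {n : ℕ} (L : Set (Fin (n+1) → ℤ)) (hL : qPeriodic q L) (k ℓ : ℕ) :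
    Ncard L k ℓ = (if ℓ = 0 then 0 else Ncard (sl L 0) k (ℓ - 1))
      + ∑ r ∈ RBfull q, ∑ c ∈ range (k+1), gcoefN q r c * Ncard (sl L r) (k - c) ℓ := by
  classical
  rw [Ncard_slice L k ℓ]
  congr 1
  calc ∑ a ∈ (Finset.Icc (-(k:ℤ)) (k:ℤ)).erase 0, Ncard (sl L a) (k - a.natAbs) ℓ
      = ∑ a ∈ (Finset.Icc (-(k:ℤ)) (k:ℤ)).erase 0,
          (fun p : ℤ × ℕ => Ncard (sl L p.1) (k - p.2) ℓ) ((fun a : ℤ => (redq q a, a.natAbs)) a) := by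
        refine Finset.sum_congr rfl fun a ha => ?_
        simp only
        rw [← sl_redq hL a]
    _ = ∑ p ∈ ((Finset.Icc (-(k:ℤ)) (k:ℤ)).erase 0).image (fun a : ℤ => (redq q a, a.natAbs)),
          ((((Finset.Icc (-(k:ℤ)) (k:ℤ)).erase 0).filter
              (fun a => (redq q a, a.natAbs) = p)).card)
            • (fun p : ℤ × ℕ => Ncard (sl L p.1) (k - p.2) ℓ) p :=
        Finset.sum_comp (fun p : ℤ × ℕ => Ncard (sl L p.1) (k - p.2) ℓ) (fun a : ℤ => (redq q a, a.natAbs))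
    _ = ∑ p ∈ RBfull q ×ˢ range (k+1),
          ((((Finset.Icc (-(k:ℤ)) (k:ℤ)).erase 0).filter
              (fun a => (redq q a, a.natAbs) = p)).card)
            • (fun p : ℤ × ℕ => Ncard (sl L p.1) (k - p.2) ℓ) p := by
        refine Finset.sum_subset ?_ ?_
        · intro p hp
          obtain ⟨a, ha, rfl⟩ := Finset.mem_image.mp hp
          obtain ⟨_, haIcc⟩ := Finset.mem_erase.mp ha
          rw [Finset.mem_Icc] at haIcc
          rw [Finset.mem_product, mem_RBfull, Finset.mem_range]
          constructor
          · rw [natAbs_redq]; exact Nat.mod_lt _ hq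
          · omega
        · intro p _ hp
          have he : (((Finset.Icc (-(k:ℤ)) (k:ℤ)).erase 0).filter
              (fun a => (redq q a, a.natAbs) = p)) = ∅ :=
            Finset.filter_eq_empty_iff.mpr
              (fun {a} ha he => hp (Finset.mem_image.mpr ⟨a, ha, he⟩))
          rw [he, Finset.card_empty, zero_smul]
    _ = ∑ r ∈ RBfull q, ∑ c ∈ range (k+1), gcoefN q r c * Ncard (sl L r) (k - c) ℓ := by
        rw [Finset.sum_product]
        refine Finset.sum_congr rfl fun r _ => Finset.sum_congr rfl fun c hc => ?_
        rw [Finset.mem_range] at hc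
        rw [card_fiber hq k r c (by omega), smul_eq_mul]

lemma thetaL_slice (hq : 0 < q) {n : ℕ} (L : Set (Fin (n+1) → ℤ)) (hL : qPeriodic q L) (ℓ : ℕ) :
    thetaL L ℓ = (if ℓ = 0 then 0 else thetaL (sl L 0) (ℓ - 1))
      + ∑ r ∈ RBfull q, gq q r * thetaL (sl L r) ℓ := by
  ext k
  rw [map_add, map_sum]
  have hterm : ∀ r ∈ RBfull q, coeff (R := ℤ) k (gq q r * thetaL (sl L r) ℓ)
      = ∑ c ∈ range (k+1), (gcoefN q r c : ℤ) * (Ncard (sl L r) (k - c) ℓ : ℤ) := by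
    intro r hr
    rw [coeff_mul, Finset.Nat.sum_antidiagonal_eq_sum_range_succ_mk]
    exact Finset.sum_congr rfl fun c _ => by
      rw [coeff_gq hq r (mem_RBfull.mp hr) c]
      simp only [thetaL, coeff_mk]
  rw [Finset.sum_congr rfl hterm]
  have hite : coeff (R := ℤ) k (if ℓ = 0 then (0 : PowerSeries ℤ) else thetaL (sl L 0) (ℓ-1))
      = ((if ℓ = 0 then 0 else Ncard (sl L 0) k (ℓ-1) : ℕ) : ℤ) := by
    split_ifs <;> simp [thetaL, coeff_mk]
  rw [hite]
  simp only [thetaL, coeff_mk]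
  rw [Ncard_slice' hq L hL k ℓ]
  push_cast [apply_ite (fun x : ℕ => (x : ℤ))]
  ring

lemma PhiL_high {n : ℕ} (L : Set (Fin n → ℤ)) (q m : ℕ) (hm : n < m) : PhiL L q m = 0 := by
  ext k
  simp only [PhiL, coeff_mk, map_zero]
  norm_cast
  rw [NcardRed]
  have he : {μ : Fin n → ℤ | (∀ i, |μ i| < (q:ℤ)) ∧ μ ∈ L ∧ onenorm μ = k ∧ zcount μ = m} = ∅ := by
    ext μ
    simp only [Set.mem_setOf_eq, Set.mem_empty_iff_false, iff_false]
    rintro ⟨_, _, _, hz⟩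
    have := zcount_le μ
    omega
  rw [he, Set.ncard_empty]

lemma PhiL_slice (hq : 0 < q) {n : ℕ} (L : Set (Fin (n+1) → ℤ)) (m : ℕ) :
    PhiL L q m = (if m = 0 then 0 else PhiL (sl L 0) q (m - 1))
      + ∑ r ∈ (RBfull q).erase 0, (X : PowerSeries ℤ)^(r.natAbs) * PhiL (sl L r) q m := by
  ext k
  rw [map_add, map_sum]
  have hterm : ∀ r ∈ (RBfull q).erase 0,
      coeff (R := ℤ) k ((X : PowerSeries ℤ)^(r.natAbs) * PhiL (sl L r) q m)
      = ((if r.natAbs ≤ k then NcardRed (sl L r) q (k - r.natAbs) m else 0 : ℕ) : ℤ) := by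
    intro r _
    rw [mul_comm, coeff_mul_X_pow']
    split_ifs <;> simp [PhiL, coeff_mk]
  rw [Finset.sum_congr rfl hterm]
  have hite : coeff (R := ℤ) k (if m = 0 then (0 : PowerSeries ℤ) else PhiL (sl L 0) q (m-1))
      = ((if m = 0 then 0 else NcardRed (sl L 0) q k (m-1) : ℕ) : ℤ) := by
    split_ifs <;> simp [PhiL, coeff_mk]
  rw [hite]
  simp only [PhiL, coeff_mk]
  rw [NcardRed_slice hq L k m]
  push_cast [apply_ite (fun x : ℕ => (x : ℤ))]
  ring

lemma dim0 (q : ℕ) (L : Set (Fin 0 → ℤ)) : thetaL L 0 = PhiL L q 0 := by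
  ext k
  simp only [thetaL, PhiL, coeff_mk, Nat.cast_inj]
  rw [Ncard, NcardRed]
  congr 1
  ext μ
  constructor
  · rintro ⟨h1, h2, h3⟩
    exact ⟨fun i => i.elim0, h1, h2, h3⟩
  · rintro ⟨_, h⟩
    exact h

lemma theta_top (hq : 0 < q) {n : ℕ} (L : Set (Fin n → ℤ)) : thetaL L n = PhiL L q n := by
  ext k
  simp only [thetaL, PhiL, coeff_mk, Nat.cast_inj]
  rw [Ncard, NcardRed]
  congr 1
  ext μ
  simp only [Set.mem_setOf_eq]
  constructor
  · rintro ⟨hL, hno, hz⟩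
    have hall : ∀ i, μ i = 0 := by
      intro i
      by_contra hi
      have h1 : (univ.filter fun j => μ j = 0) ⊆ univ.erase i := by
        intro j hj
        refine Finset.mem_erase.mpr ⟨fun he => hi ?_, Finset.mem_univ j⟩
        · rw [← he]; exact (Finset.mem_filter.mp hj).2
      have h2 := Finset.card_le_card h1
      rw [Finset.card_erase_of_mem (Finset.mem_univ i), Finset.card_univ, Fintype.card_fin] at h2
      rw [zcount] at hz
      have := i.pos
      omega
    refine ⟨fun i => ?_, hL, hno, hz⟩
    rw [hall i, abs_zero]
    exact_mod_cast hq
  · rintro ⟨_, h1, h2, h3⟩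
    exact ⟨h1, h2, h3⟩

lemma claimA (hq : 0 < q) : ∀ (n : ℕ) (L : Set (Fin n → ℤ)), qPeriodic q L → ∀ ℓ, ℓ ≤ n →
    thetaL L ℓ = (∑ s ∈ range (n - ℓ + 1),
        C (R := ℤ) (2^s * ((ℓ+s).choose s : ℤ)) * (X : PowerSeries ℤ)^(s*q) * PhiL L q (ℓ+s))
      * Sq q ^ (n - ℓ) := by
  intro n
  induction n with
  | zero =>
    intro L hL ℓ hℓ
    have h0 : ℓ = 0 := Nat.le_zero.mp hℓ
    subst h0
    simp [dim0 q L]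
  | succ n IH =>
    intro L hL ℓ hℓ
    rcases eq_or_lt_of_le hℓ with heq | hlt
    · subst heq
      rw [Nat.sub_self, pow_zero, mul_one, Finset.sum_range_one]
      rw [theta_top hq L]
      simp
    · have hln : ℓ ≤ n := by omega
      have hIH : ∀ r ∈ RBfull q, gq q r * thetaL (sl L r) ℓ
          = ((if r = 0 then C (R := ℤ) 2 * (X : PowerSeries ℤ)^q else (X : PowerSeries ℤ)^(r.natAbs))
              * ∑ s ∈ range (n - ℓ + 1),
                  C (R := ℤ) (2^s * ((ℓ+s).choose s : ℤ)) * (X : PowerSeries ℤ)^(s*q)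
                    * PhiL (sl L r) q (ℓ+s))
            * Sq q ^ (n - ℓ + 1) := by
        intro r _
        rw [IH (sl L r) (qPeriodic_sl hL r) ℓ hln, gq]
        ring
      have hΘ : (if ℓ = 0 then (0 : PowerSeries ℤ) else thetaL (sl L 0) (ℓ - 1))
          = (if ℓ = 0 then (0 : PowerSeries ℤ) else ∑ s ∈ range (n - ℓ + 1 + 1),
              C (R := ℤ) (2^s * ((ℓ-1+s).choose s : ℤ)) * (X : PowerSeries ℤ)^(s*q)
                * PhiL (sl L 0) q (ℓ-1+s))
            * Sq q ^ (n - ℓ + 1) := by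
        split_ifs with h
        · rw [zero_mul]
        · rw [IH (sl L 0) (qPeriodic_sl hL 0) (ℓ-1) (by omega)]
          have h1 : n - (ℓ-1) = n - ℓ + 1 := by omega
          rw [h1]
      rw [thetaL_slice hq L hL ℓ, hΘ, Finset.sum_congr rfl hIH, ← Finset.sum_mul, ← add_mul,
        show n + 1 - ℓ = n - ℓ + 1 from by omega]
      congr 1
      -- split off r = 0 on the left
      rw [← Finset.add_sum_erase (RBfull q) _ (show (0:ℤ) ∈ RBfull q from mem_RBfull.mpr (by omega)),
        if_pos rfl]
      rw [Finset.sum_congr rfl (fun r hr => by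
        rw [if_neg (Finset.mem_erase.mp hr).1] :
          ∀ r ∈ (RBfull q).erase 0, _ = (X : PowerSeries ℤ)^(r.natAbs)
              * ∑ s ∈ range (n - ℓ + 1),
                  C (R := ℤ) (2^s * ((ℓ+s).choose s : ℤ)) * (X : PowerSeries ℤ)^(s*q)
                    * PhiL (sl L r) q (ℓ+s))]
      -- expand the right side via PhiL_slice
      have hΦ : ∀ s ∈ range (n - ℓ + 1 + 1),
          C (R := ℤ) (2^s * ((ℓ+s).choose s : ℤ)) * (X : PowerSeries ℤ)^(s*q) * PhiL L q (ℓ+s)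
          = C (R := ℤ) (2^s * ((ℓ+s).choose s : ℤ)) * (X : PowerSeries ℤ)^(s*q) *
              ((if ℓ+s = 0 then (0 : PowerSeries ℤ) else PhiL (sl L 0) q (ℓ+s-1))
                + ∑ r ∈ (RBfull q).erase 0,
                    (X : PowerSeries ℤ)^(r.natAbs) * PhiL (sl L r) q (ℓ+s)) := by
        intro s _
        rw [← PhiL_slice hq L (ℓ+s)]
      rw [Finset.sum_congr rfl hΦ]
      simp only [mul_add]
      rw [Finset.sum_add_distrib]
      have hP1 : ∑ r ∈ (RBfull q).erase 0, ((X : PowerSeries ℤ)^(r.natAbs)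
            * ∑ s ∈ range (n - ℓ + 1),
                C (R := ℤ) (2^s * ((ℓ+s).choose s : ℤ)) * (X : PowerSeries ℤ)^(s*q)
                  * PhiL (sl L r) q (ℓ+s))
          = ∑ s ∈ range (n - ℓ + 1 + 1),
              C (R := ℤ) (2^s * ((ℓ+s).choose s : ℤ)) * (X : PowerSeries ℤ)^(s*q) *
                ∑ r ∈ (RBfull q).erase 0,
                  (X : PowerSeries ℤ)^(r.natAbs) * PhiL (sl L r) q (ℓ+s) := by
        rw [Finset.sum_range_succ]
        have htop : ∑ r ∈ (RBfull q).erase 0,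
            (X : PowerSeries ℤ)^(r.natAbs) * PhiL (sl L r) q (ℓ + (n - ℓ + 1)) = 0 :=
          Finset.sum_eq_zero fun r _ => by
            rw [PhiL_high (sl L r) q (ℓ + (n - ℓ + 1)) (by omega), mul_zero]
        rw [htop, mul_zero, add_zero]
        simp only [Finset.mul_sum]
        rw [Finset.sum_comm]
        refine Finset.sum_congr rfl fun s _ => Finset.sum_congr rfl fun r _ => by ring
      have hP2 : (if ℓ = 0 then (0 : PowerSeries ℤ) else ∑ s ∈ range (n - ℓ + 1 + 1),
              C (R := ℤ) (2^s * ((ℓ-1+s).choose s : ℤ)) * (X : PowerSeries ℤ)^(s*q)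
                * PhiL (sl L 0) q (ℓ-1+s))
          + C (R := ℤ) 2 * (X : PowerSeries ℤ)^q
              * ∑ s ∈ range (n - ℓ + 1),
                  C (R := ℤ) (2^s * ((ℓ+s).choose s : ℤ)) * (X : PowerSeries ℤ)^(s*q)
                    * PhiL (sl L 0) q (ℓ+s)
          = ∑ s ∈ range (n - ℓ + 1 + 1),
              C (R := ℤ) (2^s * ((ℓ+s).choose s : ℤ)) * (X : PowerSeries ℤ)^(s*q) *
                (if ℓ+s = 0 then (0 : PowerSeries ℤ) else PhiL (sl L 0) q (ℓ+s-1)) := by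
        rcases eq_or_ne ℓ 0 with rfl | hl0
        · rw [if_pos rfl, zero_add]
          conv_rhs => rw [Finset.sum_range_succ']
          beta_reduce
          have hF0 : C (R := ℤ) (2^0 * (((0+0).choose 0 : ℕ) : ℤ)) * (X : PowerSeries ℤ)^(0*q)
              * (if 0+0 = 0 then (0 : PowerSeries ℤ) else PhiL (sl L 0) q (0+0-1)) = 0 := by
            simp
          rw [hF0, add_zero, Finset.mul_sum]
          refine Finset.sum_congr rfl fun s _ => ?_
          rw [if_neg (by omega)]
          have hidx : 0 + (s+1) - 1 = 0 + s := by omega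
          rw [hidx]
          have h1 : ((0+s).choose s : ℤ) = 1 := by simp
          have h2 : ((0+(s+1)).choose (s+1) : ℤ) = 1 := by simp
          rw [h1, h2, mul_one, mul_one, show (s+1)*q = q + s*q from by ring, pow_add (X : PowerSeries ℤ) q (s*q)]
          have hC : C (R := ℤ) ((2:ℤ)^(s+1)) = C (R := ℤ) (2 : ℤ) * C (R := ℤ) ((2:ℤ)^s) := by
            rw [← map_mul]; congr 1; ring
          rw [hC]; ring
        · rw [if_neg hl0]
          have hR : ∀ s ∈ range (n - ℓ + 1 + 1),
              C (R := ℤ) (2^s * ((ℓ+s).choose s : ℤ)) * (X : PowerSeries ℤ)^(s*q) *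
                (if ℓ+s = 0 then (0 : PowerSeries ℤ) else PhiL (sl L 0) q (ℓ+s-1))
              = C (R := ℤ) (2^s * ((ℓ-1+s).choose s : ℤ)) * (X : PowerSeries ℤ)^(s*q)
                  * PhiL (sl L 0) q (ℓ-1+s)
                + C (R := ℤ) (2^s * (if s = 0 then 0 else ((ℓ-1+s).choose (s-1) : ℤ)))
                    * (X : PowerSeries ℤ)^(s*q) * PhiL (sl L 0) q (ℓ-1+s) := by
            intro s _
            rw [if_neg (by omega)]
            have hidx : ℓ + s - 1 = ℓ - 1 + s := by omega
            rw [hidx, ← add_mul, ← add_mul, ← map_add]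
            congr 3
            rcases Nat.eq_zero_or_pos s with rfl | hs
            · simp
            · obtain ⟨t, rfl⟩ := Nat.exists_eq_add_of_le hs
              rw [if_neg (by omega)]
              have hi1 : ℓ - 1 + (1 + t) = ℓ + t := by omega
              have hi2 : ℓ + (1 + t) = (ℓ + t) + 1 := by omega
              have hi3 : 1 + t - 1 = t := by omega
              rw [hi1, hi2, hi3]
              have := Nat.choose_succ_succ (ℓ + t) t
              have hcast : (((ℓ+t)+1).choose (t+1) : ℤ)
                  = ((ℓ+t).choose t : ℤ) + ((ℓ+t).choose (t+1) : ℤ) := by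
                exact_mod_cast this
              rw [show t + 1 = 1 + t from by ring] at hcast
              rw [hcast]
              ring
          rw [Finset.sum_congr rfl hR, Finset.sum_add_distrib]
          congr 1
          conv_rhs => rw [Finset.sum_range_succ']
          beta_reduce
          have hG0 : C (R := ℤ) (2^0 * (if (0:ℕ) = 0 then 0 else ((ℓ-1+0).choose (0-1) : ℤ)))
              * (X : PowerSeries ℤ)^(0*q) * PhiL (sl L 0) q (ℓ-1+0) = 0 := by
            simp
          rw [hG0, add_zero, Finset.mul_sum]
          refine Finset.sum_congr rfl fun s _ => ?_
          rw [if_neg (Nat.succ_ne_zero s)]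
          have hidx2 : ℓ - 1 + (s+1) = ℓ + s := by omega
          have hidx3 : s + 1 - 1 = s := rfl
          rw [hidx2, hidx3, show (s+1)*q = q + s*q from by ring, pow_add (X : PowerSeries ℤ) q (s*q)]
          have hC : C (R := ℤ) (2^(s+1) * ((ℓ+s).choose s : ℤ))
              = C (R := ℤ) (2 : ℤ) * C (R := ℤ) (2^s * ((ℓ+s).choose s : ℤ)) := by
            rw [← map_mul]; congr 1; ring
          rw [hC]; ring
      rw [← hP1, ← hP2]
      ring

end ThetaAux


/-- Theorem 2.5:
`(1-z^q)^{n-ℓ} · ϑ_𝓛^{(ℓ)}(z) = Σ_{s=0}^{n-ℓ} 2^s binom(ℓ+s,s) z^{sq} Φ_𝓛^{(ℓ+s)}(z)`. -/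
theorem stmt3 {n : ℕ} (hn : 1 ≤ n) {q : ℕ} (hq : 0 < q) (L : Set (Fin n → ℤ))
    (hL : qPeriodic q L) {ℓ : ℕ} (hℓ : ℓ ≤ n) :
    (1 - (X : PowerSeries ℤ)^q)^(n-ℓ) * thetaL L ℓ =
      ∑ s ∈ range (n-ℓ+1),
        C (R := ℤ) (2^s * ((ℓ+s).choose s : ℤ)) * (X : PowerSeries ℤ)^(s*q) * PhiL L q (ℓ+s) := by
  rw [ThetaAux.claimA hq n L hL ℓ hℓ]
  have key : ∀ (F G H : PowerSeries ℤ) (e : ℕ), G * H = 1 → G^e * (F * H^e) = F := by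
    intro F G H e hGH
    calc G^e * (F * H^e) = F * (G*H)^e := by rw [mul_pow]; ring
    _ = F := by rw [hGH, one_pow, mul_one]
  exact key _ _ _ _ (ThetaAux.one_sub_X_pow_mul_Sq hq)
end
end

section
/- Let n ≥ 1, let q be a positive integer, and let 𝓛 ⊆ ℤⁿ be a q-periodic subset. Then for all integers a ≥ 0, 0 ≤ r < q, and 0 ≤ ℓ ≤ n−1: N_𝓛(aq+r, ℓ) = Σ_{s=0}^{n−ℓ} 2ˢ binom(ℓ+s, s) Σ_{t=s}^{a} binom(t−s+n−ℓ−1, n−ℓ−1) N_𝓛^red((a−t)q+r, ℓ+s). -/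
noncomputable section

open Finset PowerSeries

lemma sum_multichoose (c u : ℕ) :
    ∑ b ∈ range (u+1), Nat.multichoose c b = Nat.multichoose (c+1) u := by
  induction u with
  | zero => simp [Nat.multichoose]
  | succ u ih =>
      rw [Finset.sum_range_succ, ih, Nat.multichoose_succ_succ, Nat.add_comm]

lemma card_piAntidiag {ι : Type*} [DecidableEq ι] (s : Finset ι) (u : ℕ) :
    (Finset.piAntidiag s u).card = Nat.multichoose s.card u := by
  induction s using Finset.cons_induction_on generalizing u with
  | empty =>
      rw [Finset.piAntidiag_empty]
      rcases Nat.eq_zero_or_pos u with rfl | hu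
      · simp [Nat.multichoose]
      · simp only [card_empty]
        rw [if_neg (by omega)]
        cases u with
        | zero => omega
        | succ u => simp [Nat.multichoose_zero_succ]
  | cons _ _ hi ih =>
      rename_i i t
      rw [Finset.piAntidiag_cons, Finset.card_disjiUnion]
      simp only [Finset.card_map, ih]
      rw [Finset.Nat.sum_antidiagonal_eq_sum_range_succ_mk]
      simp only []
      rw [Finset.card_cons]
      rw [← sum_multichoose]
      rw [← Finset.sum_range_reflect]
      apply Finset.sum_congr rfl
      intro b hb
      simp only [Finset.mem_range] at hb
      congr 1
      omega

lemma card_piAntidiag_filter_shift {ι : Type*} [DecidableEq ι] (S T : Finset ι) (hTS : T ⊆ S)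
    (t : ℕ) (hts : T.card ≤ t) :
    ((Finset.piAntidiag S t).filter (fun m => ∀ i ∈ T, 1 ≤ m i)).card
      = (Finset.piAntidiag S (t - T.card)).card := by
  refine Finset.card_bij' (fun m _ => fun i => m i - (if i ∈ T then 1 else 0))
    (fun g _ => fun i => g i + (if i ∈ T then 1 else 0)) ?hi ?hj ?left ?right
  case hi =>
    intro m hm
    simp only [Finset.mem_filter, Finset.mem_piAntidiag] at hm
    obtain ⟨⟨hsum, hsupp⟩, hT⟩ := hm
    simp only [Finset.mem_piAntidiag]
    constructor
    · have key : ∑ i ∈ S, (m i - (if i ∈ T then 1 else 0)) + ∑ i ∈ S, (if i ∈ T then 1 else 0)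
          = ∑ i ∈ S, m i := by
        rw [← Finset.sum_add_distrib]
        apply Finset.sum_congr rfl
        intro i hi
        have : (if i ∈ T then 1 else 0) ≤ m i := by
          split_ifs with h
          · exact hT i h
          · exact Nat.zero_le _
        omega
      have hcT : ∑ i ∈ S, (if i ∈ T then 1 else 0) = T.card := by
        rw [Finset.sum_ite_mem, Finset.inter_eq_right.mpr hTS]
        simp
      have hsum' : ∑ i ∈ S, m i = t := hsum
      have : ∑ i ∈ S, (m i - if i ∈ T then 1 else 0) = t - T.card := by omega
      exact this
    · intro i hi
      simp only [ne_eq] at hi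
      by_contra hiS
      have h1 : m i = 0 := not_imp_comm.mp (hsupp i) hiS
      have h2 : i ∉ T := fun h => hiS (hTS h)
      simp [h1, h2] at hi
  case hj =>
    intro g hg
    simp only [Finset.mem_piAntidiag] at hg
    obtain ⟨hsum, hsupp⟩ := hg
    simp only [Finset.mem_filter, Finset.mem_piAntidiag]
    refine ⟨⟨?_, ?_⟩, ?_⟩
    · rw [Finset.sum_add_distrib, hsum, Finset.sum_ite_mem, Finset.inter_eq_right.mpr hTS]
      simp only [Finset.sum_const, smul_eq_mul, mul_one]
      omega
    · intro i hi
      by_cases hiT : i ∈ T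
      · exact hTS hiT
      · simp only [if_neg hiT, Nat.add_zero] at hi
        exact hsupp i hi
    · intro i hi
      simp [if_pos hi]
  case left =>
    intro m hm
    funext i
    simp only [Finset.mem_filter, Finset.mem_piAntidiag] at hm
    have h : (if i ∈ T then 1 else 0) ≤ m i := by
      split_ifs with h
      · exact hm.2 i h
      · exact Nat.zero_le _
    show m i - (if i ∈ T then 1 else 0) + (if i ∈ T then 1 else 0) = m i
    omega
  case right =>
    intro g hg
    funext i
    show g i + (if i ∈ T then 1 else 0) - (if i ∈ T then 1 else 0) = g i
    omega

def boxZ (n k : ℕ) : Finset (Fin n → ℤ) := Fintype.piFinset fun _ => Finset.Icc (-(k:ℤ)) (k:ℤ)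

def Dset (n : ℕ) (ν : Fin n → ℤ) (t s : ℕ) : Finset (Fin n → ℤ) :=
  (boxZ n t).filter (fun d => (∀ i, 0 ≤ ν i * d i) ∧ (∑ i, (d i).natAbs) = t ∧
    (univ.filter (fun i => ν i = 0 ∧ d i ≠ 0)).card = s)

def coefFn {n : ℕ} (ν : Fin n → ℤ) (ε : Fin n → Bool) (i : Fin n) : ℤ :=
  if ν i ≠ 0 then Int.sign (ν i) else if ε i then 1 else -1

lemma natAbs_coef {c : ℤ} (hc : c = 1 ∨ c = -1) (m : ℕ) : ((c * (m:ℤ)).natAbs) = m := by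
  rcases hc with h | h <;> simp [h]

lemma coefFn_pm {n : ℕ} (ν : Fin n → ℤ) (ε : Fin n → Bool) (i : Fin n) :
    coefFn ν ε i = 1 ∨ coefFn ν ε i = -1 := by
  unfold coefFn
  by_cases hν : ν i = 0
  · by_cases hb : ε i <;> simp [hν, hb]
  · rcases Int.lt_or_lt_of_ne hν with h | h
    · right; simp [hν, Int.sign_eq_neg_one_of_neg h]
    · left; simp [hν, Int.sign_eq_one_of_pos h]

lemma natAbs_coefFn {n : ℕ} (ν : Fin n → ℤ) (ε : Fin n → Bool) (i : Fin n) (m : ℕ) :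
    ((coefFn ν ε i * (m:ℤ)).natAbs) = m := natAbs_coef (coefFn_pm ν ε i) m

lemma card_fiberT {n : ℕ} (ν : Fin n → ℤ) (t s : ℕ) (T : Finset (Fin n))
    (hT : T ⊆ univ.filter (fun i => ν i = 0)) (hTcard : T.card = s) (hst : s ≤ t) :
    ((Dset n ν t s).filter
        (fun d => (univ.filter (fun i => ν i = 0)).filter (fun i => d i ≠ 0) = T)).card
      = 2^s * ((Finset.piAntidiag ((univ.filter fun i => ν i ≠ 0) ∪ T) (t - s)).card) := by
  set S : Finset (Fin n) := (univ.filter fun i => ν i ≠ 0) ∪ T with hS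
  have hTS : T ⊆ S := subset_union_right
  have hTz : ∀ i ∈ T, ν i = 0 := fun i hi => (mem_filter.mp (hT hi)).2
  set E : Finset (Fin n → Bool) :=
    Fintype.piFinset (fun i => if i ∈ T then ({true, false} : Finset Bool) else {true}) with hE
  set M : Finset (Fin n → ℕ) :=
    (Finset.piAntidiag S t).filter (fun m => ∀ i ∈ T, 1 ≤ m i) with hM
  have key : ((Dset n ν t s).filter
      (fun d => (univ.filter (fun i => ν i = 0)).filter (fun i => d i ≠ 0) = T)).card
      = (E ×ˢ M).card := by
    refine Finset.card_bij'
      (fun d _ => ((fun i => if i ∈ T then decide (0 < d i) else true), fun i => (d i).natAbs))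
      (fun p _ => (fun i => coefFn ν p.1 i * (p.2 i : ℤ)))
      ?hi ?hj ?left ?right
    case hi =>
      intro d hd
      simp only [Finset.mem_filter, Dset] at hd
      obtain ⟨⟨hbox, hsgn, hsum, hcard⟩, hfib⟩ := hd
      have hsupp : ∀ i, (d i).natAbs ≠ 0 → i ∈ S := by
        intro i hi
        by_cases hν : ν i = 0
        · refine Finset.mem_union_right _ ?_
          rw [← hfib]; simp [hν, Int.natAbs_ne_zero.mp hi]
        · exact Finset.mem_union_left _ (by simp [hν])
      rw [Finset.mem_product]
      constructor
      · simp only [hE, Fintype.mem_piFinset]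
        intro i
        by_cases hiT : i ∈ T
        · simp only [if_pos hiT]
          simp only [Finset.mem_insert, Finset.mem_singleton]
          rcases Bool.dichotomy (decide (0 < d i)) with h | h <;> simp [h]
        · simp [hiT]
      · simp only [hM, Finset.mem_filter, Finset.mem_piAntidiag]
        refine ⟨⟨?_, fun i hi => hsupp i hi⟩, ?_⟩
        · rw [Finset.sum_subset (Finset.subset_univ S)]
          · exact hsum
          · intro i _ hiS
            exact not_imp_comm.mp (hsupp i) hiS
        · intro i hi
          have : d i ≠ 0 := by
            have := hfib ▸ hi
            exact (Finset.mem_filter.mp this).2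
          omega
    case hj =>
      intro p hp
      rw [Finset.mem_product] at hp
      obtain ⟨hpE, hpM⟩ := hp
      simp only [hM, Finset.mem_filter, Finset.mem_piAntidiag] at hpM
      obtain ⟨⟨hsum, hsupp⟩, hTone⟩ := hpM
      have habs : ∀ i, ((coefFn ν p.1 i * (p.2 i : ℤ)).natAbs) = p.2 i :=
        fun i => natAbs_coefFn ν p.1 i _
      have hmt : ∀ i, p.2 i ≤ t := by
        intro i
        by_cases hiS : i ∈ S
        · calc p.2 i ≤ ∑ j ∈ S, p.2 j := Finset.single_le_sum (fun j _ => Nat.zero_le _) hiS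
            _ = t := hsum
        · rw [not_imp_comm.mp (hsupp i) hiS]; exact Nat.zero_le _
      have hne : ∀ i, (coefFn ν p.1 i * (p.2 i : ℤ) ≠ 0 ↔ p.2 i ≠ 0) := by
        intro i
        rw [← Int.natAbs_ne_zero, habs i]
      have hfib : (univ.filter (fun i => ν i = 0)).filter
          (fun i => coefFn ν p.1 i * (p.2 i : ℤ) ≠ 0) = T := by
        ext i
        simp only [Finset.mem_filter, Finset.mem_univ, true_and, hne i]
        constructor
        · rintro ⟨hν, hm⟩
          rcases Finset.mem_union.mp (hsupp i hm) with h | h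
          · exact absurd hν (by simpa using h)
          · exact h
        · intro hiT
          exact ⟨hTz i hiT, by have := hTone i hiT; omega⟩
      simp only [Finset.mem_filter, Dset]
      refine ⟨⟨?_, ?_, ?_, ?_⟩, hfib⟩
      · simp only [boxZ, Fintype.mem_piFinset]
        intro i
        rw [Finset.mem_Icc, ← abs_le, Int.abs_eq_natAbs, habs i]
        exact_mod_cast hmt i
      · intro i
        by_cases hν : ν i = 0
        · simp [hν]
        · rcases Int.lt_or_lt_of_ne hν with h | h
          · have hc1 : coefFn ν p.1 i = -1 := by
              simp [coefFn, hν, Int.sign_eq_neg_one_of_neg h]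
            rw [hc1]
            have : (0:ℤ) ≤ (p.2 i : ℤ) := by positivity
            nlinarith
          · have hc1 : coefFn ν p.1 i = 1 := by
              simp [coefFn, hν, Int.sign_eq_one_of_pos h]
            rw [hc1]
            have : (0:ℤ) ≤ (p.2 i : ℤ) := by positivity
            nlinarith
      · calc ∑ i, (coefFn ν p.1 i * (p.2 i : ℤ)).natAbs = ∑ i, p.2 i := by
              exact Finset.sum_congr rfl (fun i _ => habs i)
          _ = ∑ i ∈ S, p.2 i := (Finset.sum_subset (Finset.subset_univ S)
              (fun i _ hiS => not_imp_comm.mp (hsupp i) hiS)).symm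
          _ = t := hsum
      · have hff : univ.filter (fun i => ν i = 0 ∧ coefFn ν p.1 i * (p.2 i:ℤ) ≠ 0)
            = (univ.filter (fun i => ν i = 0)).filter
                (fun i => coefFn ν p.1 i * (p.2 i:ℤ) ≠ 0) := by
          ext i; simp
        rw [hff, hfib, hTcard]
    case left =>
      intro d hd
      simp only [Finset.mem_filter, Dset] at hd
      obtain ⟨⟨hbox, hsgn, hsum, hcard⟩, hfib⟩ := hd
      funext i
      show coefFn ν (fun i => if i ∈ T then decide (0 < d i) else true) i
          * ((d i).natAbs : ℤ) = d i
      by_cases hν : ν i = 0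
      · by_cases hiT : i ∈ T
        · have hdne : d i ≠ 0 := by
            have : i ∈ (univ.filter (fun i => ν i = 0)).filter (fun i => d i ≠ 0) := hfib ▸ hiT
            exact (Finset.mem_filter.mp this).2
          by_cases hpos : 0 < d i
          · have : coefFn ν (fun i => if i ∈ T then decide (0 < d i) else true) i = 1 := by
              simp [coefFn, hν, hiT, hpos]
            rw [this]
            omega
          · have : coefFn ν (fun i => if i ∈ T then decide (0 < d i) else true) i = -1 := by
              simp [coefFn, hν, hiT, hpos]
            rw [this]
            omega
        · have hd0 : d i = 0 := by
            by_contra hdne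
            have : i ∈ (univ.filter (fun j => ν j = 0)).filter (fun j => d j ≠ 0) := by
              simp [hν, hdne]
            exact hiT (hfib ▸ this)
          simp [hd0]
      · have hsg := hsgn i
        rcases Int.lt_or_lt_of_ne hν with h | h
        · have hd0 : d i ≤ 0 := by nlinarith
          have : coefFn ν (fun i => if i ∈ T then decide (0 < d i) else true) i = -1 := by
            simp [coefFn, hν, Int.sign_eq_neg_one_of_neg h]
          rw [this]
          omega
        · have hd0 : 0 ≤ d i := by nlinarith
          have : coefFn ν (fun i => if i ∈ T then decide (0 < d i) else true) i = 1 := by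
            simp [coefFn, hν, Int.sign_eq_one_of_pos h]
          rw [this]
          omega
    case right =>
      intro p hp
      rw [Finset.mem_product] at hp
      obtain ⟨hpE, hpM⟩ := hp
      simp only [hM, Finset.mem_filter, Finset.mem_piAntidiag] at hpM
      obtain ⟨⟨hsum, hsupp⟩, hTone⟩ := hpM
      simp only [hE, Fintype.mem_piFinset] at hpE
      have hprod : ∀ {a b : Fin n → Bool} {c d : Fin n → ℕ},
          a = b → c = d → (a, c) = ((b, d) : (Fin n → Bool) × (Fin n → ℕ)) := by
        intro a b c d h1 h2; rw [h1, h2]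
      have h2 : (fun i => (coefFn ν p.1 i * (p.2 i : ℤ)).natAbs) = p.2 := by
        funext i
        exact natAbs_coefFn ν p.1 i _
      have h1 : (fun i => if i ∈ T then decide (0 < coefFn ν p.1 i * (p.2 i : ℤ)) else true)
          = p.1 := by
        funext i
        by_cases hiT : i ∈ T
        · have hm1 : 1 ≤ p.2 i := hTone i hiT
          have hν : ν i = 0 := hTz i hiT
          have hmz : (0:ℤ) < (p.2 i : ℤ) := by exact_mod_cast hm1
          by_cases hb : p.1 i
          · have hc1 : coefFn ν p.1 i = 1 := by simp [coefFn, hν, hb]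
            simp [hiT, hc1, hmz, hb]
            omega
          · have hc1 : coefFn ν p.1 i = -1 := by simp [coefFn, hν, hb]
            have hneg : ¬ (0:ℤ) < -1 * (p.2 i : ℤ) := by omega
            simp only [if_pos hiT, hc1]
            rw [decide_eq_false hneg]
            simp [Bool.not_eq_true] at hb
            exact hb.symm
        · have := hpE i
          rw [if_neg hiT] at this
          simp only [Finset.mem_singleton] at this
          rw [if_neg hiT]
          exact this.symm
      calc ((fun i => if i ∈ T then decide (0 < coefFn ν p.1 i * (p.2 i : ℤ)) else true),
            fun i => (coefFn ν p.1 i * (p.2 i : ℤ)).natAbs) = (p.1, p.2) := hprod h1 h2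
        _ = p := rfl
  rw [key, Finset.card_product]
  congr 1
  · rw [Fintype.card_piFinset]
    calc ∏ i, (if i ∈ T then ({true, false} : Finset Bool) else {true}).card
        = ∏ i, (if i ∈ T then 2 else 1) := by
          apply Finset.prod_congr rfl
          intro i _
          by_cases hiT : i ∈ T <;> simp [hiT]
      _ = ∏ _i ∈ univ.filter (· ∈ T), 2 := (Finset.prod_filter _ _).symm
      _ = 2^s := by
          have huT : univ.filter (· ∈ T) = T := by ext i; simp
          rw [huT, Finset.prod_const, hTcard]
  · have hle : T.card ≤ t := le_trans (le_of_eq hTcard) hst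
    have h := card_piAntidiag_filter_shift S T hTS t hle
    rw [hTcard] at h
    rw [hM]
    convert h using 2
    ext m
    simp

lemma card_Dset {n : ℕ} (ν : Fin n → ℤ) {ℓ s t : ℕ}
    (hz : (univ.filter fun i => ν i = 0).card = ℓ + s) (hℓn : ℓ < n) (hsn : ℓ + s ≤ n)
    (hst : s ≤ t) :
    (Dset n ν t s).card = 2 ^ s * (ℓ + s).choose s * (t - s + n - ℓ - 1).choose (n - ℓ - 1) := by
  have hmap : ∀ d ∈ Dset n ν t s,
      (univ.filter (fun i => ν i = 0)).filter (fun i => d i ≠ 0)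
        ∈ (univ.filter fun i => ν i = 0).powersetCard s := by
    intro d hd
    simp only [Dset, Finset.mem_filter] at hd
    rw [Finset.mem_powersetCard]
    refine ⟨Finset.filter_subset _ _, ?_⟩
    rw [Finset.filter_filter]
    exact hd.2.2.2
  rw [Finset.card_eq_sum_card_fiberwise hmap]
  have hconst : ∀ T ∈ (univ.filter fun i => ν i = 0).powersetCard s,
      ((Dset n ν t s).filter
        (fun d => (univ.filter (fun i => ν i = 0)).filter (fun i => d i ≠ 0) = T)).card
      = 2 ^ s * (t - s + n - ℓ - 1).choose (n - ℓ - 1) := by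
    intro T hT
    rw [Finset.mem_powersetCard] at hT
    obtain ⟨hTsub, hTcard⟩ := hT
    rw [card_fiberT ν t s T hTsub hTcard hst]
    congr 1
    rw [card_piAntidiag]
    have hdisj : Disjoint (univ.filter fun i => ν i ≠ 0) T := by
      rw [Finset.disjoint_left]
      intro i hi hiT
      exact (Finset.mem_filter.mp hi).2 (Finset.mem_filter.mp (hTsub hiT)).2
    have hcu : ((univ.filter fun i => ν i ≠ 0) ∪ T).card = n - ℓ := by
      rw [Finset.card_union_of_disjoint hdisj, hTcard]
      have := Finset.card_filter_add_card_filter_not (s := (univ : Finset (Fin n)))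
        (p := fun i => ν i = 0)
      rw [Finset.card_univ, Fintype.card_fin] at this
      have hne : (univ.filter fun i => ¬ ν i = 0).card = n - (ℓ + s) := by omega
      have hee : (univ.filter fun i => ν i ≠ 0) = (univ.filter fun i => ¬ ν i = 0) := rfl
      rw [hee, hne]
      omega
    rw [hcu, Nat.multichoose_eq]
    have h1 : n - ℓ + (t - s) - 1 = t - s + n - ℓ - 1 := by omega
    rw [h1]
    have h3 := Nat.choose_symm (n := t - s + n - ℓ - 1) (k := t - s) (by omega)
    have h4 : t - s + n - ℓ - 1 - (t - s) = n - ℓ - 1 := by omega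
    rw [h4] at h3
    exact h3.symm
  rw [Finset.sum_congr rfl hconst, Finset.sum_const, Finset.card_powersetCard, hz, smul_eq_mul]
  ring

def redv {n : ℕ} (q : ℕ) (μ : Fin n → ℤ) : Fin n → ℤ :=
  fun i => Int.sign (μ i) * (((μ i).natAbs % q : ℕ) : ℤ)

def quov {n : ℕ} (q : ℕ) (μ : Fin n → ℤ) : Fin n → ℤ :=
  fun i => Int.sign (μ i) * (((μ i).natAbs / q : ℕ) : ℤ)

lemma redv_add_q_quov {n : ℕ} (q : ℕ) (μ : Fin n → ℤ) (i : Fin n) :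
    redv q μ i + (q : ℤ) * quov q μ i = μ i := by
  unfold redv quov
  have h : (((μ i).natAbs % q : ℕ) : ℤ) + (q:ℤ) * (((μ i).natAbs / q : ℕ) : ℤ)
      = ((μ i).natAbs : ℤ) := by exact_mod_cast Nat.mod_add_div (μ i).natAbs q
  calc (μ i).sign * (((μ i).natAbs % q : ℕ) : ℤ)
        + (q : ℤ) * ((μ i).sign * (((μ i).natAbs / q : ℕ) : ℤ))
      = (μ i).sign * ((((μ i).natAbs % q : ℕ) : ℤ)
          + (q:ℤ) * (((μ i).natAbs / q : ℕ) : ℤ)) := by ring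
    _ = (μ i).sign * ((μ i).natAbs : ℤ) := by rw [h]
    _ = μ i := Int.sign_mul_natAbs (μ i)

lemma natAbs_redv {n : ℕ} (q : ℕ) (μ : Fin n → ℤ) (i : Fin n) :
    (redv q μ i).natAbs = (μ i).natAbs % q := by
  by_cases h : μ i = 0
  · simp [redv, h]
  · unfold redv
    rw [Int.natAbs_mul, Int.natAbs_sign_of_ne_zero h, one_mul, Int.natAbs_natCast]

lemma natAbs_quov {n : ℕ} (q : ℕ) (μ : Fin n → ℤ) (i : Fin n) :
    (quov q μ i).natAbs = (μ i).natAbs / q := by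
  by_cases h : μ i = 0
  · simp [quov, h]
  · unfold quov
    rw [Int.natAbs_mul, Int.natAbs_sign_of_ne_zero h, one_mul, Int.natAbs_natCast]

lemma natAbs_add_of_mul_nonneg {x y : ℤ} (h : 0 ≤ x * y) :
    (x + y).natAbs = x.natAbs + y.natAbs := by
  rcases le_or_gt 0 x with hx | hx
  · rcases le_or_gt 0 y with hy | hy
    · exact Int.natAbs_add_of_nonneg hx hy
    · rcases eq_or_lt_of_le hx with hx0 | hx0
      · simp [← hx0]
      · nlinarith
  · rcases le_or_gt 0 y with hy | hy
    · rcases eq_or_lt_of_le hy with hy0 | hy0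
      · simp [← hy0]
      · nlinarith
    · have : (x + y).natAbs = ((-x) + (-y)).natAbs := by
        rw [show (-x) + (-y) = -(x+y) by ring, Int.natAbs_neg]
      rw [this, Int.natAbs_add_of_nonneg (by omega) (by omega), Int.natAbs_neg, Int.natAbs_neg]

lemma mem_boxZ {n k : ℕ} {μ : Fin n → ℤ} : μ ∈ boxZ n k ↔ ∀ i, (μ i).natAbs ≤ k := by
  simp only [boxZ, Fintype.mem_piFinset, Finset.mem_Icc]
  constructor
  · intro h i; have := h i; omega
  · intro h i; have := h i; omega

lemma mem_boxZ_of_onenorm {n k : ℕ} {μ : Fin n → ℤ} (h : onenorm μ = k) : μ ∈ boxZ n k := by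
  rw [mem_boxZ]
  intro i
  calc (μ i).natAbs ≤ ∑ j, (μ j).natAbs :=
        Finset.single_le_sum (f := fun j => (μ j).natAbs)
          (fun j _ => Nat.zero_le _) (Finset.mem_univ i)
    _ = k := h

lemma quov_ne_zero_iff {n : ℕ} {q : ℕ} (hq : 0 < q) (μ : Fin n → ℤ) (i : Fin n)
    (hred : (μ i).natAbs % q = 0) : quov q μ i ≠ 0 ↔ μ i ≠ 0 := by
  rw [← Int.natAbs_ne_zero, natAbs_quov]
  have hm : μ i ≠ 0 ↔ (μ i).natAbs ≠ 0 := Int.natAbs_ne_zero.symm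
  rw [hm]
  constructor
  · intro h h0
    apply h
    simp [h0]
  · intro h
    have hq2 : q ≤ (μ i).natAbs := Nat.le_of_dvd (by omega) (Nat.dvd_of_mod_eq_zero hred)
    have := (Nat.one_le_div_iff hq).mpr hq2
    omega

open scoped Classical in
noncomputable def Af {n : ℕ} (L : Set (Fin n → ℤ)) (k ℓ : ℕ) : Finset (Fin n → ℤ) :=
  (boxZ n k).filter (fun μ => μ ∈ L ∧ onenorm μ = k ∧ zcount μ = ℓ)

open scoped Classical in
noncomputable def Rf {n : ℕ} (L : Set (Fin n → ℤ)) (q k ℓ : ℕ) : Finset (Fin n → ℤ) :=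
  (boxZ n k).filter (fun ν => (∀ i, |ν i| < (q:ℤ)) ∧ ν ∈ L ∧ onenorm ν = k ∧ zcount ν = ℓ)

set_option maxHeartbeats 1600000 in
lemma card_Af_eq {n : ℕ} {q : ℕ} (hq : 0 < q) (L : Set (Fin n → ℤ))
    (hL : qPeriodic q L) (a r ℓ : ℕ) (hr : r < q) (hℓ : ℓ < n) :
    (Af L (a*q + r) ℓ).card =
      ∑ s ∈ range (n-ℓ+1), ∑ t ∈ Icc s a, ∑ ν ∈ Rf L q ((a-t)*q + r) (ℓ+s),
        (Dset n ν t s).card := by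
  classical
  have key : (Af L (a*q + r) ℓ).card =
      ((range (n-ℓ+1)).sigma (fun s => (Icc s a).sigma (fun t =>
        (Rf L q ((a-t)*q + r) (ℓ+s)).sigma (fun ν => Dset n ν t s)))).card := by
    refine Finset.card_bij'
      (fun μ _ => ⟨zcount (redv q μ) - ℓ, ∑ i, (quov q μ i).natAbs, redv q μ, quov q μ⟩)
      (fun x _ => x.2.2.1 + (q:ℤ) • x.2.2.2)
      ?hi ?hj ?left ?right
    case hi =>
      intro μ hμ
      simp only [Af, Finset.mem_filter] at hμ
      obtain ⟨hbox, hμL, hone, hzc⟩ := hμ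
      set t := ∑ i, (quov q μ i).natAbs with htdef
      have ht' : t = ∑ i, (μ i).natAbs / q :=
        Finset.sum_congr rfl (fun i _ => natAbs_quov q μ i)
      have hmodsum : (∑ i, (μ i).natAbs % q) + q * t = a*q + r := by
        rw [ht', Finset.mul_sum, ← Finset.sum_add_distrib]
        calc ∑ i, ((μ i).natAbs % q + q * ((μ i).natAbs / q)) = ∑ i, (μ i).natAbs :=
              Finset.sum_congr rfl (fun i _ => Nat.mod_add_div _ _)
          _ = a*q + r := hone
      have hta : t ≤ a := by
        have h5 : q*(a+1) = a*q + q := by ring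
        have h6 : q * t < q * (a+1) := by omega
        have := Nat.lt_of_mul_lt_mul_left h6
        omega
      have honred : onenorm (redv q μ) = (a-t)*q + r := by
        have hsub : (a-t)*q + q*t = a*q := by
          rw [mul_comm q t, ← add_mul, Nat.sub_add_cancel hta]
        have hor : onenorm (redv q μ) = ∑ i, (μ i).natAbs % q :=
          Finset.sum_congr rfl (fun i _ => natAbs_redv q μ i)
        omega
      have hsub0 : (univ.filter fun i => μ i = 0) ⊆ (univ.filter fun i => redv q μ i = 0) := by
        intro i hi
        simp only [Finset.mem_filter] at *
        exact ⟨hi.1, by simp [redv, hi.2]⟩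
      have hℓle : ℓ ≤ zcount (redv q μ) := by
        rw [← hzc]
        exact Finset.card_le_card hsub0
      have hzn : zcount (redv q μ) ≤ n := by
        unfold zcount
        calc (univ.filter fun i => redv q μ i = 0).card ≤ (univ : Finset (Fin n)).card :=
              Finset.card_filter_le _ _
          _ = n := by simp
      have hredzero : ∀ i, redv q μ i = 0 ↔ (μ i).natAbs % q = 0 := by
        intro i
        rw [← Int.natAbs_eq_zero, natAbs_redv]
      have he1 : univ.filter (fun i => redv q μ i = 0 ∧ μ i = 0)
          = univ.filter (fun i => μ i = 0) := by
        ext i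
        simp only [Finset.mem_filter, Finset.mem_univ, true_and]
        constructor
        · rintro ⟨_, h⟩; exact h
        · intro h; exact ⟨by simp [redv, h], h⟩
      have he2 : univ.filter (fun i => redv q μ i = 0 ∧ ¬ μ i = 0)
          = univ.filter (fun i => redv q μ i = 0 ∧ quov q μ i ≠ 0) := by
        ext i
        simp only [Finset.mem_filter, Finset.mem_univ, true_and]
        constructor
        · rintro ⟨h1, h2⟩
          exact ⟨h1, (quov_ne_zero_iff hq μ i ((hredzero i).mp h1)).mpr h2⟩
        · rintro ⟨h1, h2⟩
          exact ⟨h1, (quov_ne_zero_iff hq μ i ((hredzero i).mp h1)).mp h2⟩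
      have hW : (univ.filter fun i => redv q μ i = 0 ∧ quov q μ i ≠ 0).card
          = zcount (redv q μ) - ℓ := by
        have hsplit := Finset.card_filter_add_card_filter_not
          (s := univ.filter fun i => redv q μ i = 0) (p := fun i => μ i = 0)
        rw [Finset.filter_filter, Finset.filter_filter, he1, he2] at hsplit
        have : (univ.filter (fun i => μ i = 0)).card = ℓ := hzc
        unfold zcount at *
        omega
      have hst : zcount (redv q μ) - ℓ ≤ t := by
        have h1 : (univ.filter fun i => redv q μ i = 0 ∧ quov q μ i ≠ 0)
            ⊆ (univ.filter fun i => quov q μ i ≠ 0) := by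
          intro i hi
          simp only [Finset.mem_filter] at *
          exact ⟨hi.1, hi.2.2⟩
        have h2 : (univ.filter fun i => quov q μ i ≠ 0).card ≤ t := by
          have h3 : ∀ i ∈ (univ.filter fun i => quov q μ i ≠ 0), 1 ≤ (quov q μ i).natAbs := by
            intro i hi
            simp only [Finset.mem_filter] at hi
            have := Int.natAbs_eq_zero (a := quov q μ i)
            omega
          calc (univ.filter fun i => quov q μ i ≠ 0).card
              = ∑ _i ∈ (univ.filter fun i => quov q μ i ≠ 0), 1 := by
                rw [Finset.sum_const, smul_eq_mul, mul_one]
            _ ≤ ∑ i ∈ (univ.filter fun i => quov q μ i ≠ 0), (quov q μ i).natAbs :=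
                Finset.sum_le_sum h3
            _ ≤ ∑ i, (quov q μ i).natAbs :=
                Finset.sum_le_sum_of_subset (Finset.filter_subset _ _)
            _ = t := rfl
        calc zcount (redv q μ) - ℓ
            = (univ.filter fun i => redv q μ i = 0 ∧ quov q μ i ≠ 0).card := hW.symm
          _ ≤ (univ.filter fun i => quov q μ i ≠ 0).card := Finset.card_le_card h1
          _ ≤ t := h2
      have hsum_eq : redv q μ + (q:ℤ) • quov q μ = μ := by
        funext i
        simp only [Pi.add_apply, Pi.smul_apply, smul_eq_mul]
        exact redv_add_q_quov q μ i
      simp only [Finset.mem_sigma]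
      refine ⟨?_, ?_, ?_, ?_⟩
      · rw [Finset.mem_range]; omega
      · rw [Finset.mem_Icc]; exact ⟨hst, hta⟩
      · simp only [Rf, Finset.mem_filter]
        refine ⟨mem_boxZ_of_onenorm honred, ?_, ?_, honred, by omega⟩
        · intro i
          rw [Int.abs_eq_natAbs, natAbs_redv]
          exact_mod_cast Nat.mod_lt _ hq
        · exact (hL (redv q μ) (quov q μ)).mpr (by rw [hsum_eq]; exact hμL)
      · simp only [Dset, Finset.mem_filter]
        refine ⟨?_, ?_, by trivial, hW⟩
        · rw [mem_boxZ]
          intro i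
          calc (quov q μ i).natAbs ≤ ∑ j, (quov q μ j).natAbs :=
              Finset.single_le_sum (f := fun j => (quov q μ j).natAbs)
                (fun j _ => Nat.zero_le _) (Finset.mem_univ i)
            _ = t := rfl
        · intro i
          have hexp : redv q μ i * quov q μ i = ((μ i).sign)^2 *
              ((((μ i).natAbs % q : ℕ):ℤ) * (((μ i).natAbs / q : ℕ):ℤ)) := by
            unfold redv quov; ring
          rw [hexp]
          positivity
    case hj =>
      rintro ⟨s, t, ν, d⟩ hx
      simp only [Finset.mem_sigma] at hx
      obtain ⟨hs, ht, hν, hd⟩ := hx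
      rw [Finset.mem_range] at hs
      rw [Finset.mem_Icc] at ht
      simp only [Rf, Finset.mem_filter] at hν
      obtain ⟨hνbox, hνq, hνL, hνone, hνz⟩ := hν
      simp only [Dset, Finset.mem_filter] at hd
      obtain ⟨hdbox, hsgn, hdsum, hdcard⟩ := hd
      have habs : ∀ i, ((ν + (q:ℤ)•d) i).natAbs = (ν i).natAbs + q * (d i).natAbs := by
        intro i
        have h0 : 0 ≤ ν i * ((q:ℤ) * d i) := by
          rw [show ν i * ((q:ℤ)*d i) = (q:ℤ)*(ν i*d i) by ring]
          exact mul_nonneg (by positivity) (hsgn i)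
        show (ν i + (q:ℤ)*d i).natAbs = (ν i).natAbs + q * (d i).natAbs
        rw [natAbs_add_of_mul_nonneg h0, Int.natAbs_mul, Int.natAbs_natCast]
      have hone' : onenorm (ν + (q:ℤ)•d) = a*q + r := by
        have hsub : (a-t)*q + q*t = a*q := by
          rw [mul_comm q t, ← add_mul, Nat.sub_add_cancel ht.2]
        unfold onenorm
        rw [Finset.sum_congr rfl (fun i _ => habs i), Finset.sum_add_distrib, ← Finset.mul_sum,
          hdsum]
        unfold onenorm at hνone
        omega
      have hz' : zcount (ν + (q:ℤ)•d) = ℓ := by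
        have hiff : ∀ i, ((ν + (q:ℤ)•d) i = 0 ↔ (ν i = 0 ∧ d i = 0)) := by
          intro i
          rw [← Int.natAbs_eq_zero, habs i]
          constructor
          · intro h
            have hX : q * (d i).natAbs = 0 := by omega
            have h2 : (d i).natAbs = 0 := by
              rcases Nat.mul_eq_zero.mp hX with h' | h'
              · omega
              · exact h'
            have h1 : (ν i).natAbs = 0 := by omega
            exact ⟨Int.natAbs_eq_zero.mp h1, Int.natAbs_eq_zero.mp h2⟩
          · rintro ⟨h1, h2⟩
            simp [h1, h2]
        have hflt : univ.filter (fun i => (ν + (q:ℤ)•d) i = 0)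
            = univ.filter (fun i => ν i = 0 ∧ d i = 0) := by
          ext i
          simp only [Finset.mem_filter, Finset.mem_univ, true_and]
          exact hiff i
        have hsplit := Finset.card_filter_add_card_filter_not
          (s := univ.filter fun i => ν i = 0) (p := fun i => d i ≠ 0)
        rw [Finset.filter_filter, Finset.filter_filter] at hsplit
        have he3 : univ.filter (fun i => ν i = 0 ∧ ¬ d i ≠ 0)
            = univ.filter (fun i => ν i = 0 ∧ d i = 0) := by
          ext i
          simp only [Finset.mem_filter, Finset.mem_univ, true_and, ne_eq, not_not]
        have hdc : (univ.filter (fun i => ν i = 0 ∧ d i ≠ 0)).card = s := hdcard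
        unfold zcount at hνz
        rw [he3] at hsplit
        unfold zcount
        rw [hflt]
        omega
      simp only [Af, Finset.mem_filter]
      exact ⟨mem_boxZ_of_onenorm hone', (hL ν d).mp hνL, hone', hz'⟩
    case left =>
      intro μ hμ
      funext i
      simp only [Pi.add_apply, Pi.smul_apply, smul_eq_mul]
      exact redv_add_q_quov q μ i
    case right =>
      rintro ⟨s, t, ν, d⟩ hx
      simp only [Finset.mem_sigma] at hx
      obtain ⟨hs, ht, hν, hd⟩ := hx
      rw [Finset.mem_range] at hs
      rw [Finset.mem_Icc] at ht
      simp only [Rf, Finset.mem_filter] at hν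
      obtain ⟨hνbox, hνq, hνL, hνone, hνz⟩ := hν
      simp only [Dset, Finset.mem_filter] at hd
      obtain ⟨hdbox, hsgn, hdsum, hdcard⟩ := hd
      have hνlt : ∀ i, (ν i).natAbs < q := by
        intro i
        have := hνq i
        rw [Int.abs_eq_natAbs] at this
        exact_mod_cast this
      have habs : ∀ i, ((ν + (q:ℤ)•d) i).natAbs = (ν i).natAbs + q * (d i).natAbs := by
        intro i
        have h0 : 0 ≤ ν i * ((q:ℤ) * d i) := by
          rw [show ν i * ((q:ℤ)*d i) = (q:ℤ)*(ν i*d i) by ring]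
          exact mul_nonneg (by positivity) (hsgn i)
        show (ν i + (q:ℤ)*d i).natAbs = (ν i).natAbs + q * (d i).natAbs
        rw [natAbs_add_of_mul_nonneg h0, Int.natAbs_mul, Int.natAbs_natCast]
      have happ : ∀ i, (ν + (q:ℤ)•d) i = ν i + (q:ℤ) * d i := by
        intro i
        simp [Pi.add_apply, Pi.smul_apply, smul_eq_mul]
      have hreq : redv q (ν + (q:ℤ)•d) = ν := by
        funext i
        have hmod : ((ν + (q:ℤ)•d) i).natAbs % q = (ν i).natAbs := by
          rw [habs i, Nat.add_mul_mod_self_left, Nat.mod_eq_of_lt (hνlt i)]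
        unfold redv
        rw [hmod]
        rcases lt_trichotomy (ν i) 0 with h | h | h
        · have hd0 : d i ≤ 0 := by nlinarith [hsgn i]
          have hμ'neg : (ν + (q:ℤ)•d) i < 0 := by
            rw [happ i]
            nlinarith
          rw [Int.sign_eq_neg_one_of_neg hμ'neg]
          omega
        · rw [h]
          simp [h]
        · have hd0 : 0 ≤ d i := by nlinarith [hsgn i]
          have hμ'pos : 0 < (ν + (q:ℤ)•d) i := by
            rw [happ i]
            nlinarith
          rw [Int.sign_eq_one_of_pos hμ'pos]
          omega
      have hquo : quov q (ν + (q:ℤ)•d) = d := by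
        funext i
        have hdiv : ((ν + (q:ℤ)•d) i).natAbs / q = (d i).natAbs := by
          rw [habs i, Nat.add_mul_div_left _ _ hq, Nat.div_eq_of_lt (hνlt i), Nat.zero_add]
        unfold quov
        rw [hdiv]
        rcases lt_trichotomy (d i) 0 with h | h | h
        · have hν0 : ν i ≤ 0 := by nlinarith [hsgn i]
          have hμ'neg : (ν + (q:ℤ)•d) i < 0 := by
            rw [happ i]
            have hqz : (1:ℤ) ≤ (q:ℤ) := by exact_mod_cast hq
            nlinarith
          rw [Int.sign_eq_neg_one_of_neg hμ'neg]
          omega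
        · rw [h]
          simp [h]
        · have hν0 : 0 ≤ ν i := by nlinarith [hsgn i]
          have hμ'pos : 0 < (ν + (q:ℤ)•d) i := by
            rw [happ i]
            have hqz : (1:ℤ) ≤ (q:ℤ) := by exact_mod_cast hq
            nlinarith
          rw [Int.sign_eq_one_of_pos hμ'pos]
          omega
      have hsl : ℓ + s - ℓ = s := by omega
      simp only [hreq, hquo, hνz, hdsum, hsl]
  rw [key]
  simp only [Finset.card_sigma]

lemma Ncard_eq {n : ℕ} (L : Set (Fin n → ℤ)) (k ℓ : ℕ) :
    Ncard L k ℓ = (Af L k ℓ).card := by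
  classical
  rw [Ncard, ← Set.ncard_coe_finset]
  congr 1
  ext μ
  simp only [Af, Set.mem_setOf_eq, Finset.coe_filter, Finset.mem_coe, Finset.mem_filter]
  constructor
  · rintro ⟨h1, h2, h3⟩
    exact ⟨mem_boxZ_of_onenorm h2, h1, h2, h3⟩
  · rintro ⟨_, h⟩
    exact h

lemma NcardRed_eq {n : ℕ} (L : Set (Fin n → ℤ)) (q k ℓ : ℕ) :
    NcardRed L q k ℓ = (Rf L q k ℓ).card := by
  classical
  rw [NcardRed, ← Set.ncard_coe_finset]
  congr 1
  ext ν
  simp only [Rf, Set.mem_setOf_eq, Finset.coe_filter, Finset.mem_coe, Finset.mem_filter]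
  constructor
  · rintro ⟨h1, h2, h3, h4⟩
    exact ⟨mem_boxZ_of_onenorm h3, h1, h2, h3, h4⟩
  · rintro ⟨_, h⟩
    exact h

/-- formula (3.13):
`N_𝓛(aq+r, ℓ) = Σ_{s=0}^{n-ℓ} 2^s binom(ℓ+s,s) Σ_{t=s}^{a}
  binom(t-s+n-ℓ-1, n-ℓ-1) N_𝓛^red((a-t)q+r, ℓ+s)`. -/
theorem stmt6 {n : ℕ} (hn : 1 ≤ n) {q : ℕ} (hq : 0 < q) (L : Set (Fin n → ℤ))
    (hL : qPeriodic q L) (a r ℓ : ℕ) (hr : r < q) (hℓ : ℓ ≤ n - 1) :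
    Ncard L (a*q + r) ℓ =
      ∑ s ∈ range (n-ℓ+1), 2^s * (ℓ+s).choose s *
        ∑ t ∈ Icc s a, (t - s + n - ℓ - 1).choose (n - ℓ - 1) *
          NcardRed L q ((a-t)*q + r) (ℓ+s) := by
  classical
  have hℓn : ℓ < n := by omega
  rw [Ncard_eq, card_Af_eq hq L hL a r ℓ hr hℓn]
  apply Finset.sum_congr rfl
  intro s hs
  rw [Finset.mem_range] at hs
  rw [Finset.mul_sum]
  apply Finset.sum_congr rfl
  intro t ht
  rw [Finset.mem_Icc] at ht
  have hinner : ∀ ν ∈ Rf L q ((a-t)*q + r) (ℓ+s), (Dset n ν t s).card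
      = 2^s * (ℓ+s).choose s * ((t - s + n - ℓ - 1).choose (n - ℓ - 1)) := by
    intro ν hν
    simp only [Rf, Finset.mem_filter] at hν
    have hz : (univ.filter fun i => ν i = 0).card = ℓ + s := hν.2.2.2.2
    have hsn : ℓ + s ≤ n := by
      rw [← hz]
      calc (univ.filter fun i => ν i = 0).card ≤ (univ : Finset (Fin n)).card :=
            Finset.card_filter_le _ _
        _ = n := by simp
    exact card_Dset ν hz hℓn hsn ht.1
  rw [Finset.sum_congr rfl hinner, Finset.sum_const, smul_eq_mul, NcardRed_eq]
  ring
end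
end

section
/- Let n ≥ 2, let 𝓛 be any subset of ℤⁿ, and let 1 ≤ p ≤ n. Then the following identity of formal power series in ℤ[[z]] holds: zᵖ(1−z²)^{n−1} · Σ_{k≥0} M_𝓛(k+1, p) zᵏ = Σ_{ℓ=0}^{n} [ ϑ_𝓛^{(ℓ)}(z) · Ã_p^{(ℓ)}(z) − (1−z²)^{n−1} · B̃_{𝓛,p}^{(ℓ)}(z) ]. (This is Claim 3.5 in the proof of Theorem 2.2, multiplied through by zᵖ(1−z²)^{n−1}.) -/
noncomputable section

open Finset PowerSeries

namespace Stmt7Aux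

open Finset PowerSeries

variable {n : ℕ} (L : Set (Fin n → ℤ))

/-- Coefficients of `θ^{(ℓ)}/(1-z²)^{n-1}`. -/
def cTheta (ℓ h : ℕ) : ℤ :=
  ∑ s ∈ range (h/2 + 1), (Ncard L (h - 2*s) ℓ : ℤ) * ((s + n - 2).choose (n-2) : ℤ)

/-- Inverse of `(1-X²)^(d+1)`. -/
def G (d : ℕ) : PowerSeries ℤ :=
  PowerSeries.mk fun m => if Even m then ((m/2 + d).choose d : ℤ) else 0

lemma gstep (d : ℕ) : (1 - (X : PowerSeries ℤ)^2) * G (d+1) = G d := by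
  ext m
  rw [sub_mul, one_mul, map_sub, coeff_X_pow_mul']
  rcases Nat.lt_or_ge m 2 with h | h
  · interval_cases m <;> simp [G, Nat.even_iff]
  · rw [if_pos h]
    simp only [G, coeff_mk]
    have hpar : Even (m - 2) ↔ Even m := by
      rw [Nat.even_sub h]
      simp
    by_cases he : Even m
    · rw [if_pos he, if_pos he, if_pos (hpar.2 he)]
      have h2 : (m-2)/2 = m/2 - 1 := by omega
      have h1 : 1 ≤ m/2 := by omega
      rw [h2]
      have : m/2 + (d+1) = (m/2 - 1 + (d+1)) + 1 := by omega
      rw [this, Nat.choose_succ_succ']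
      have : m/2 - 1 + (d+1) = m/2 + d := by omega
      rw [this]
      push_cast
      ring
    · rw [if_neg he, if_neg he, if_neg (fun hh => he (hpar.1 hh))]
      simp

lemma gbase : (1 - (X : PowerSeries ℤ)^2) * G 0 = 1 := by
  ext m
  rw [sub_mul, one_mul, map_sub, coeff_X_pow_mul']
  rcases Nat.lt_or_ge m 2 with h | h
  · interval_cases m <;> simp [G, Nat.even_iff]
  · rw [if_pos h, coeff_one, if_neg (by omega)]
    simp only [G, coeff_mk, Nat.choose_zero_right, Nat.cast_one]
    have hpar : Even (m - 2) ↔ Even m := by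
      rw [Nat.even_sub h]
      simp
    by_cases he : Even m
    · rw [if_pos he, if_pos (hpar.2 he)]; ring
    · rw [if_neg he, if_neg (fun hh => he (hpar.1 hh))]; ring

lemma gpow (d : ℕ) : (1 - (X : PowerSeries ℤ)^2)^(d+1) * G d = 1 := by
  induction d with
  | zero => simpa using gbase
  | succ d ih =>
    have : (1 - (X : PowerSeries ℤ)^2)^(d+2) * G (d+1)
        = (1 - (X : PowerSeries ℤ)^2)^(d+1) * ((1 - (X : PowerSeries ℤ)^2) * G (d+1)) := by
      ring
    rw [this, gstep, ih]

lemma mk_cTheta (hn : 2 ≤ n) (ℓ : ℕ) :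
    PowerSeries.mk (cTheta L ℓ) = thetaL L ℓ * G (n-2) := by
  ext m
  rw [coeff_mk, PowerSeries.coeff_mul, Finset.Nat.sum_antidiagonal_eq_sum_range_succ_mk]
  simp only [thetaL, G, coeff_mk]
  rw [← Finset.sum_range_reflect]
  have hstep : ∀ b ∈ range (m+1),
      (Ncard L (m + 1 - 1 - b) ℓ : ℤ) *
        (if Even (m - (m + 1 - 1 - b)) then (((m - (m+1-1-b))/2 + (n-2)).choose (n-2) : ℤ) else 0)
      = if Even b then (Ncard L (m - b) ℓ : ℤ) * ((b/2 + (n-2)).choose (n-2) : ℤ) else 0 := by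
    intro b hb
    rw [mem_range] at hb
    have h1 : m + 1 - 1 - b = m - b := by omega
    have h2 : m - (m - b) = b := by omega
    rw [h1, h2]
    split_ifs <;> simp
  rw [Finset.sum_congr rfl hstep, ← Finset.sum_filter]
  unfold cTheta
  refine Finset.sum_nbij' (fun s => 2*s) (fun b => b/2) ?_ ?_ ?_ ?_ ?_
  · intro s hs
    simp only [mem_range] at hs
    simp only [mem_filter, mem_range]
    exact ⟨by omega, ⟨s, by omega⟩⟩
  · intro b hb
    simp only [mem_filter, mem_range] at hb
    simp only [mem_range]
    omega
  · intro s _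
    omega
  · intro b hb
    simp only [mem_filter, mem_range] at hb
    obtain ⟨_, c, hc⟩ := hb
    omega
  · intro s hs
    simp only [mem_range] at hs
    have h1 : 2*s/2 = s := by omega
    have h2 : s + n - 2 = s + (n - 2) := by omega
    rw [h1, h2]

lemma lemA (hn : 2 ≤ n) (ℓ : ℕ) :
    (1 - (X : PowerSeries ℤ)^2)^(n-1) * PowerSeries.mk (cTheta L ℓ) = thetaL L ℓ := by
  rw [mk_cTheta L hn ℓ]
  have h1 : n - 1 = (n - 2) + 1 := by omega
  calc (1 - (X : PowerSeries ℤ)^2)^(n-1) * (thetaL L ℓ * G (n-2))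
      = thetaL L ℓ * ((1 - (X : PowerSeries ℤ)^2)^((n-2)+1) * G (n-2)) := by rw [← h1]; ring
    _ = thetaL L ℓ := by rw [gpow]; ring

lemma ibinom_zero_of_lt {b a : ℤ} (h : b < a) : ibinom b a = 0 := by
  unfold ibinom; rw [if_pos (Or.inr h)]

lemma ibinom_nonneg_eq (hn : 2 ≤ n) (s : ℕ) :
    ibinom ((s : ℤ) + n - 2) ((n : ℤ) - 2) = ((s + n - 2).choose (n-2) : ℤ) := by
  unfold ibinom
  rw [if_neg (by push_neg; omega)]
  have h1 : ((s : ℤ) + n - 2).toNat = s + n - 2 := by omega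
  have h2 : ((n : ℤ) - 2).toNat = n - 2 := by omega
  rw [h1, h2]

/-- The series `Σ_k F_k z^k` appearing in the decomposition of `M`. -/
def mkF (p ℓ d : ℕ) : PowerSeries ℤ :=
  PowerSeries.mk fun k =>
    ∑ r ∈ range ((k+p)/2 + 1),
      (Ncard L (k+p-2*r) ℓ : ℤ) * ibinom ((r:ℤ) + d - p + n - 2) ((n:ℤ) - 2)

lemma Fcoef (hn : 2 ≤ n) {p ℓ d : ℕ} (hd1 : 1 ≤ d) (hdp : d ≤ p) (k : ℕ) :
    (∑ r ∈ range ((k+p)/2 + 1),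
      (Ncard L (k+p-2*r) ℓ : ℤ) * ibinom ((r:ℤ) + d - p + n - 2) ((n:ℤ) - 2))
    = if p ≤ k + 2*d then cTheta L ℓ (k + 2*d - p) else 0 := by
  by_cases hc : p ≤ k + 2*d
  · rw [if_pos hc]
    set m := k + 2*d - p with hm
    have hkp : k + p = m + 2*(p - d) := by omega
    have hr : (k+p)/2 + 1 = (p - d) + (m/2 + 1) := by omega
    rw [hr, Finset.range_eq_Ico, ← Finset.sum_Ico_consecutive _ (Nat.zero_le (p-d)) (by omega : p - d ≤ (p-d) + (m/2+1))]
    have hz : ∑ r ∈ Finset.Ico 0 (p - d), (Ncard L (k+p-2*r) ℓ : ℤ) * ibinom ((r:ℤ) + d - p + n - 2) ((n:ℤ) - 2) = 0 := by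
      refine Finset.sum_eq_zero fun r hr => ?_
      rw [Finset.mem_Ico] at hr
      rw [ibinom_zero_of_lt (by omega)]
      ring
    rw [hz, zero_add, Finset.sum_Ico_eq_sum_range]
    have hlen : (p-d) + (m/2+1) - (p-d) = m/2 + 1 := by omega
    rw [hlen]
    unfold cTheta
    refine Finset.sum_congr rfl fun s hs => ?_
    rw [mem_range] at hs
    have h1 : k + p - 2*(p - d + s) = m - 2*s := by omega
    have h2 : ((p - d + s : ℕ) : ℤ) + d - p + n - 2 = (s : ℤ) + n - 2 := by
      push_cast; omega
    rw [h1, h2, ibinom_nonneg_eq hn]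
  · rw [if_neg hc]
    refine Finset.sum_eq_zero fun r hr => ?_
    rw [mem_range] at hr
    rw [ibinom_zero_of_lt (by omega)]
    ring

lemma coeff_Upsilon (M : ℤ) (ℓ m : ℕ) :
    (PowerSeries.coeff m) (Upsilon L M ℓ) = if (m : ℤ) ≤ M then cTheta L ℓ m else 0 := by
  unfold Upsilon
  by_cases hM : M < 0
  · rw [if_pos hM, if_neg (by omega)]
    simp
  · rw [if_neg hM, map_sum]
    have : ∀ h ∈ range (M.toNat + 1),
        (PowerSeries.coeff m) (C (R := ℤ) (∑ s ∈ range (h/2 + 1),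
            (Ncard L (h - 2*s) ℓ : ℤ) * ((s + n - 2).choose (n-2) : ℤ)) * X^h)
        = if m = h then cTheta L ℓ h else 0 := by
      intro h _
      rw [coeff_C_mul_X_pow]
      rfl
    rw [Finset.sum_congr rfl this, Finset.sum_ite_eq (range (M.toNat+1)) m (cTheta L ℓ)]
    by_cases hm : (m : ℤ) ≤ M
    · rw [if_pos (by simp only [mem_range]; omega), if_pos hm]
    · rw [if_neg (by simp only [mem_range]; omega), if_neg hm]

lemma core (hn : 2 ≤ n) {p ℓ d : ℕ} (hd1 : 1 ≤ d) (hdp : d ≤ p) :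
    (X : PowerSeries ℤ)^p * mkF L p ℓ d
      = (X : PowerSeries ℤ)^(2*(p-d)) *
          (PowerSeries.mk (cTheta L ℓ) - Upsilon L (2*(d:ℤ) - p - 1) ℓ) := by
  ext m
  rw [coeff_X_pow_mul', coeff_X_pow_mul']
  simp only [map_sub, coeff_mk, coeff_Upsilon, mkF]
  by_cases h1 : p ≤ m
  · rw [if_pos h1, Fcoef L hn hd1 hdp]
    by_cases h2 : 2*(p-d) ≤ m
    · rw [if_pos h2]
      have h3 : p ≤ (m - p) + 2*d := by omega
      rw [if_pos h3, if_neg (by omega : ¬ ((m - 2*(p-d) : ℕ) : ℤ) ≤ 2*(d:ℤ) - p - 1)]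
      have : m - p + 2*d - p = m - 2*(p-d) := by omega
      rw [this, sub_zero]
    · rw [if_neg h2, if_neg (by omega)]
  · rw [if_neg h1]
    by_cases h2 : 2*(p-d) ≤ m
    · rw [if_pos h2, if_pos (by omega : ((m - 2*(p-d) : ℕ) : ℤ) ≤ 2*(d:ℤ) - p - 1)]
      ring
    · rw [if_neg h2]

lemma core2 (hn : 2 ≤ n) {p ℓ d : ℕ} (hd1 : 1 ≤ d) (hdp : d ≤ p) :
    thetaL L ℓ * (X : PowerSeries ℤ)^(2*(p-d))
      - (1 - (X : PowerSeries ℤ)^2)^(n-1) *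
          ((X : PowerSeries ℤ)^(2*(p-d)) * Upsilon L (2*(d:ℤ) - p - 1) ℓ)
      = (X : PowerSeries ℤ)^p * (1 - (X : PowerSeries ℤ)^2)^(n-1) * mkF L p ℓ d := by
  have hA := lemA L hn ℓ
  have hC := core L hn hd1 hdp (p := p) (ℓ := ℓ)
  calc thetaL L ℓ * (X : PowerSeries ℤ)^(2*(p-d))
      - (1 - (X : PowerSeries ℤ)^2)^(n-1) * ((X : PowerSeries ℤ)^(2*(p-d)) * Upsilon L (2*(d:ℤ) - p - 1) ℓ)
      = (1 - (X : PowerSeries ℤ)^2)^(n-1) *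
          ((X : PowerSeries ℤ)^(2*(p-d)) * (PowerSeries.mk (cTheta L ℓ) - Upsilon L (2*(d:ℤ) - p - 1) ℓ)) := by
        rw [← hA]; ring
    _ = (1 - (X : PowerSeries ℤ)^2)^(n-1) * ((X : PowerSeries ℤ)^p * mkF L p ℓ d) := by rw [← hC]
    _ = (X : PowerSeries ℤ)^p * (1 - (X : PowerSeries ℤ)^2)^(n-1) * mkF L p ℓ d := by ring

lemma lev_i (hn : 2 ≤ n) {p ℓ j t α : ℕ} (hj1 : 1 ≤ j) (hb : j + 2*t + α ≤ p) :
    thetaL L ℓ * (∑ i ∈ range j, (X : PowerSeries ℤ)^(2*p - 2*(j+t+α-i)))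
      - (1 - (X : PowerSeries ℤ)^2)^(n-1) *
          (∑ i ∈ range j, (X : PowerSeries ℤ)^(2*p - 2*(j+t+α-i)) *
            Upsilon L (2*((j:ℤ) + t + α - i) - p - 1) ℓ)
      = (X : PowerSeries ℤ)^p * (1 - (X : PowerSeries ℤ)^2)^(n-1) *
          ∑ i ∈ range j, mkF L p ℓ (j+t+α-i) := by
  rw [Finset.mul_sum, Finset.mul_sum, Finset.mul_sum, ← Finset.sum_sub_distrib]
  refine Finset.sum_congr rfl fun i hi => ?_
  rw [mem_range] at hi
  have hd1 : 1 ≤ j + t + α - i := by omega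
  have hdp : j + t + α - i ≤ p := by omega
  have he : 2*p - 2*(j+t+α-i) = 2*(p - (j+t+α-i)) := by omega
  have ha : 2*((j:ℤ) + t + α - i) - p - 1 = 2*(((j+t+α-i : ℕ)) : ℤ) - p - 1 := by
    have : ((j+t+α-i : ℕ) : ℤ) = (j:ℤ) + t + α - i := by omega
    rw [this]
  rw [he, ha]
  exact core2 L hn hd1 hdp

lemma lev_a (hn : 2 ≤ n) {p ℓ j t β : ℕ} (hj1 : 1 ≤ j) (hb : j + 2*t + β ≤ p) :
    thetaL L ℓ * (∑ α ∈ range (β+1), C (R := ℤ) (ibinom (β:ℤ) α) *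
        ∑ i ∈ range j, (X : PowerSeries ℤ)^(2*p - 2*(j+t+α-i)))
      - (1 - (X : PowerSeries ℤ)^2)^(n-1) *
          (∑ α ∈ range (β+1), C (R := ℤ) (ibinom (β:ℤ) α) *
            ∑ i ∈ range j, (X : PowerSeries ℤ)^(2*p - 2*(j+t+α-i)) *
              Upsilon L (2*((j:ℤ) + t + α - i) - p - 1) ℓ)
      = (X : PowerSeries ℤ)^p * (1 - (X : PowerSeries ℤ)^2)^(n-1) *
          ∑ α ∈ range (β+1), C (R := ℤ) (ibinom (β:ℤ) α) * ∑ i ∈ range j, mkF L p ℓ (j+t+α-i) := by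
  rw [Finset.mul_sum, Finset.mul_sum, Finset.mul_sum, ← Finset.sum_sub_distrib]
  refine Finset.sum_congr rfl fun α hα => ?_
  rw [mem_range] at hα
  have h := lev_i L hn (p := p) (ℓ := ℓ) (j := j) (t := t) (α := α) hj1 (by omega)
  linear_combination (C (R := ℤ) (ibinom (β:ℤ) α)) * h

lemma lev_b (hn : 2 ≤ n) {p ℓ j t : ℕ} (hj1 : 1 ≤ j) (hb : j + 2*t ≤ p) :
    thetaL L ℓ * (∑ β ∈ range (p-j-2*t+1),
        C (R := ℤ) (2^(p-j-2*t-β) * ibinom ((n:ℤ) - ℓ) β * ibinom (ℓ:ℤ) ((p-j-2*t-β : ℕ))) *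
        ∑ α ∈ range (β+1), C (R := ℤ) (ibinom (β:ℤ) α) *
          ∑ i ∈ range j, (X : PowerSeries ℤ)^(2*p - 2*(j+t+α-i)))
      - (1 - (X : PowerSeries ℤ)^2)^(n-1) *
          (∑ β ∈ range (p-j-2*t+1),
            C (R := ℤ) (2^(p-j-2*t-β) * ibinom ((n:ℤ) - ℓ) β * ibinom (ℓ:ℤ) ((p-j-2*t-β : ℕ))) *
            ∑ α ∈ range (β+1), C (R := ℤ) (ibinom (β:ℤ) α) *
              ∑ i ∈ range j, (X : PowerSeries ℤ)^(2*p - 2*(j+t+α-i)) *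
                Upsilon L (2*((j:ℤ) + t + α - i) - p - 1) ℓ)
      = (X : PowerSeries ℤ)^p * (1 - (X : PowerSeries ℤ)^2)^(n-1) *
          ∑ β ∈ range (p-j-2*t+1),
            C (R := ℤ) (2^(p-j-2*t-β) * ibinom ((n:ℤ) - ℓ) β * ibinom (ℓ:ℤ) ((p-j-2*t-β : ℕ))) *
            ∑ α ∈ range (β+1), C (R := ℤ) (ibinom (β:ℤ) α) * ∑ i ∈ range j, mkF L p ℓ (j+t+α-i) := by
  rw [Finset.mul_sum, Finset.mul_sum, Finset.mul_sum, ← Finset.sum_sub_distrib]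
  refine Finset.sum_congr rfl fun β hβ => ?_
  rw [mem_range] at hβ
  have h := lev_a L hn (p := p) (ℓ := ℓ) (j := j) (t := t) (β := β) hj1 (by omega)
  linear_combination (C (R := ℤ) (2^(p-j-2*t-β) * ibinom ((n:ℤ) - ℓ) β * ibinom (ℓ:ℤ) ((p-j-2*t-β : ℕ)))) * h

lemma lev_t (hn : 2 ≤ n) {p ℓ j : ℕ} (hj1 : 1 ≤ j) (hjp : j ≤ p) :
    thetaL L ℓ * (∑ t ∈ range ((p-j)/2 + 1), C (R := ℤ) (ibinom ((n:ℤ) - p + j + 2*t) t) *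
        ∑ β ∈ range (p-j-2*t+1),
          C (R := ℤ) (2^(p-j-2*t-β) * ibinom ((n:ℤ) - ℓ) β * ibinom (ℓ:ℤ) ((p-j-2*t-β : ℕ))) *
          ∑ α ∈ range (β+1), C (R := ℤ) (ibinom (β:ℤ) α) *
            ∑ i ∈ range j, (X : PowerSeries ℤ)^(2*p - 2*(j+t+α-i)))
      - (1 - (X : PowerSeries ℤ)^2)^(n-1) *
          (∑ t ∈ range ((p-j)/2 + 1), C (R := ℤ) (ibinom ((n:ℤ) - p + j + 2*t) t) *
            ∑ β ∈ range (p-j-2*t+1),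
              C (R := ℤ) (2^(p-j-2*t-β) * ibinom ((n:ℤ) - ℓ) β * ibinom (ℓ:ℤ) ((p-j-2*t-β : ℕ))) *
              ∑ α ∈ range (β+1), C (R := ℤ) (ibinom (β:ℤ) α) *
                ∑ i ∈ range j, (X : PowerSeries ℤ)^(2*p - 2*(j+t+α-i)) *
                  Upsilon L (2*((j:ℤ) + t + α - i) - p - 1) ℓ)
      = (X : PowerSeries ℤ)^p * (1 - (X : PowerSeries ℤ)^2)^(n-1) *
          ∑ t ∈ range ((p-j)/2 + 1), C (R := ℤ) (ibinom ((n:ℤ) - p + j + 2*t) t) *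
            ∑ β ∈ range (p-j-2*t+1),
              C (R := ℤ) (2^(p-j-2*t-β) * ibinom ((n:ℤ) - ℓ) β * ibinom (ℓ:ℤ) ((p-j-2*t-β : ℕ))) *
              ∑ α ∈ range (β+1), C (R := ℤ) (ibinom (β:ℤ) α) * ∑ i ∈ range j, mkF L p ℓ (j+t+α-i) := by
  rw [Finset.mul_sum, Finset.mul_sum, Finset.mul_sum, ← Finset.sum_sub_distrib]
  refine Finset.sum_congr rfl fun t ht => ?_
  rw [mem_range] at ht
  have h := lev_b L hn (p := p) (ℓ := ℓ) (j := j) (t := t) hj1 (by omega)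
  linear_combination (C (R := ℤ) (ibinom ((n:ℤ) - p + j + 2*t) t)) * h

/-- The inner series for a fixed `ℓ`. -/
def innerF (p ℓ : ℕ) : PowerSeries ℤ :=
  PowerSeries.mk fun k =>
    ∑ r ∈ range ((k+p)/2 + 1),
      (Ncard L (k+p-2*r) ℓ : ℤ) *
      ∑ j ∈ Icc 1 p, (-1 : ℤ)^(j-1) *
        ∑ t ∈ range ((p-j)/2 + 1), ibinom ((n : ℤ) - p + j + 2*t) t *
          ∑ β ∈ range (p-j-2*t+1),
            2^(p-j-2*t-β) * ibinom ((n : ℤ) - ℓ) β * ibinom (ℓ : ℤ) ((p-j-2*t-β : ℕ)) *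
            ∑ α ∈ range (β+1), ibinom (β : ℤ) α *
              ∑ i ∈ range j, ibinom ((r : ℤ) - i - p + j + α + t + n - 2) ((n : ℤ) - 2)

lemma innerF_eq (p ℓ : ℕ) :
    innerF L p ℓ = ∑ j ∈ Icc 1 p, C (R := ℤ) ((-1 : ℤ)^(j-1)) *
      ∑ t ∈ range ((p-j)/2 + 1), C (R := ℤ) (ibinom ((n:ℤ) - p + j + 2*t) t) *
        ∑ β ∈ range (p-j-2*t+1),
          C (R := ℤ) (2^(p-j-2*t-β) * ibinom ((n:ℤ) - ℓ) β * ibinom (ℓ:ℤ) ((p-j-2*t-β : ℕ))) *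
          ∑ α ∈ range (β+1), C (R := ℤ) (ibinom (β:ℤ) α) *
            ∑ i ∈ range j, mkF L p ℓ (j+t+α-i) := by
  ext k
  simp only [innerF, coeff_mk, map_sum, coeff_C_mul, mkF, Finset.mul_sum]
  conv_lhs => rw [Finset.sum_comm]
  refine Finset.sum_congr rfl fun j hj => ?_
  conv_lhs => rw [Finset.sum_comm]
  refine Finset.sum_congr rfl fun t ht => ?_
  conv_lhs => rw [Finset.sum_comm]
  refine Finset.sum_congr rfl fun β hβ => ?_
  conv_lhs => rw [Finset.sum_comm]
  refine Finset.sum_congr rfl fun α hα => ?_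
  conv_lhs => rw [Finset.sum_comm]
  refine Finset.sum_congr rfl fun i hi => ?_
  refine Finset.sum_congr rfl fun r hr => ?_
  rw [mem_range] at hi
  have harg : (r : ℤ) - i - p + j + α + t + n - 2 = (r:ℤ) + ((j+t+α-i : ℕ) : ℤ) - p + n - 2 := by
    have : ((j+t+α-i : ℕ) : ℤ) = (j:ℤ) + t + α - i := by omega
    rw [this]; ring
  rw [harg]
  ring

lemma perL (hn : 2 ≤ n) {p : ℕ} (hp1 : 1 ≤ p) (hpn : p ≤ n) (ℓ : ℕ) :
    thetaL L ℓ * Atilde n p ℓ - (1 - (X : PowerSeries ℤ)^2)^(n-1) * Btilde L p ℓ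
      = (X : PowerSeries ℤ)^p * (1 - (X : PowerSeries ℤ)^2)^(n-1) * innerF L p ℓ := by
  rw [innerF_eq]
  unfold Atilde Btilde
  rw [Finset.mul_sum, Finset.mul_sum, Finset.mul_sum, ← Finset.sum_sub_distrib]
  refine Finset.sum_congr rfl fun j hj => ?_
  rw [Finset.mem_Icc] at hj
  have h := lev_t L hn (p := p) (ℓ := ℓ) (j := j) hj.1 hj.2
  linear_combination (C (R := ℤ) ((-1 : ℤ)^(j-1))) * h

lemma mk_Mcoef {p : ℕ} :
    PowerSeries.mk (fun k => Mcoef L (k+1) p) = ∑ ℓ ∈ range (n+1), innerF L p ℓ := by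
  ext k
  rw [coeff_mk, map_sum]
  simp only [innerF, coeff_mk]
  unfold Mcoef
  simp only [Nat.add_sub_cancel]

end Stmt7Aux

/-- Claim 3.5:
`z^p (1-z^2)^{n-1} · Σ_{k≥0} M_𝓛(k+1,p) z^k
  = Σ_{ℓ=0}^{n} [ ϑ_𝓛^{(ℓ)}(z) Ã_p^{(ℓ)}(z) - (1-z^2)^{n-1} B̃_{𝓛,p}^{(ℓ)}(z) ]`. -/
theorem stmt7 {n : ℕ} (hn : 2 ≤ n) (L : Set (Fin n → ℤ)) {p : ℕ}
    (hp1 : 1 ≤ p) (hpn : p ≤ n) :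
    (X : PowerSeries ℤ)^p * (1 - (X : PowerSeries ℤ)^2)^(n-1) *
        PowerSeries.mk (fun k => Mcoef L (k+1) p) =
      ∑ ℓ ∈ range (n+1),
        (thetaL L ℓ * Atilde n p ℓ - (1 - (X : PowerSeries ℤ)^2)^(n-1) * Btilde L p ℓ) := by
  classical
  rw [Stmt7Aux.mk_Mcoef L, Finset.mul_sum]
  exact Finset.sum_congr rfl fun ℓ _ => (Stmt7Aux.perL L hn hp1 hpn ℓ).symm
end
end

section
/- Let n ≥ 2, let 𝓛 be any subset of ℤⁿ, let 1 ≤ p ≤ n and 0 ≤ ℓ ≤ n. Then B̃_{𝓛,p}^{(ℓ)}(z) = Σ_{g=0}^{p−1} z^{2g} · Υ_{p−1−2g}^{(ℓ)}(z) · C_{p,g}^{(ℓ)}. (This is Claim 3.6 in the proof of Theorem 2.2, multiplied through by zᵖ.) -/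
noncomputable section

open Finset PowerSeries

lemma ibinom_eq_zero {b a : ℤ} (h : a < 0 ∨ b < a) : ibinom b a = 0 := by
  unfold ibinom; exact if_pos h

set_option maxHeartbeats 1000000

lemma sum_swap_aux {A : Type*} {M : Type*} [CommRing M] (s : Finset A) (m : ℕ)
    (c : A → M) (d : A → ℕ → M) (S : ℕ → M) :
    ∑ x ∈ s, c x * ∑ g ∈ Finset.range m, d x g * S g
      = ∑ g ∈ Finset.range m, (∑ x ∈ s, c x * d x g) * S g := by
  simp_rw [Finset.mul_sum, Finset.sum_mul, mul_assoc]
  exact Finset.sum_comm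

lemma core {n : ℕ} (L : Set (Fin n → ℤ)) (p ℓ j t β i : ℕ)
    (hj1 : 1 ≤ j) (hjp : j ≤ p) (hbt : β + 2*t + j ≤ p) (hi : i < j) :
    ∑ α ∈ range (β+1),
        C (R := ℤ) (ibinom (β:ℤ) (α:ℤ)) *
          ((X : PowerSeries ℤ)^(2*p - 2*(j+t+α-i)) *
            Upsilon L (2*((j : ℤ) + t + α - i) - p - 1) ℓ)
      = ∑ g ∈ range p,
          C (R := ℤ) (ibinom (β:ℤ) ((p : ℤ) + i - j - t - g)) *
            ((X : PowerSeries ℤ)^(2*g) * Upsilon L ((p : ℤ) - 1 - 2*g) ℓ) := by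
  have hsub : (range (β+1)).image (fun α => p - j - t + i - α) ⊆ range p := by
    intro g hg
    simp only [mem_image, mem_range] at hg ⊢
    obtain ⟨α, hα, rfl⟩ := hg
    omega
  have hzero : ∀ g ∈ range p, g ∉ (range (β+1)).image (fun α => p - j - t + i - α) →
      C (R := ℤ) (ibinom (β:ℤ) ((p : ℤ) + i - j - t - g)) *
        ((X : PowerSeries ℤ)^(2*g) * Upsilon L ((p : ℤ) - 1 - 2*g) ℓ) = 0 := by
    intro g hg hng
    simp only [mem_range] at hg
    have hcond : ((p : ℤ) + i - j - t - g < 0 ∨ (β:ℤ) < (p : ℤ) + i - j - t - g) := by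
      by_contra h
      push_neg at h
      refine hng (mem_image.mpr ⟨p + i - j - t - g, ?_, ?_⟩)
      · simp only [mem_range]; omega
      · omega
    rw [ibinom_eq_zero hcond, map_zero, zero_mul]
  rw [← Finset.sum_subset hsub hzero,
    Finset.sum_image (fun a ha b hb hab => by
      simp only [mem_coe, mem_range, coe_range, Set.mem_Iio] at ha hb; omega)]
  refine Finset.sum_congr rfl fun α hα => ?_
  simp only [mem_range] at hα
  have h1 : (p : ℤ) + i - j - t - ((p - j - t + i - α : ℕ) : ℤ) = (α : ℤ) := by omega
  have h2 : 2 * (p - j - t + i - α) = 2*p - 2*(j+t+α-i) := by omega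
  have h3 : (p : ℤ) - 1 - 2*((p - j - t + i - α : ℕ) : ℤ) = 2*((j : ℤ)+t+α-i) - p - 1 := by
    omega
  rw [h1, h2, h3]

lemma inner {n : ℕ} (L : Set (Fin n → ℤ)) (p ℓ j t β : ℕ)
    (hj1 : 1 ≤ j) (hjp : j ≤ p) (hbt : β + 2*t + j ≤ p) :
    ∑ α ∈ range (β+1), C (R := ℤ) (ibinom (β:ℤ) (α:ℤ)) *
        ∑ i ∈ range j,
          (X : PowerSeries ℤ)^(2*p - 2*(j+t+α-i)) *
            Upsilon L (2*((j : ℤ) + t + α - i) - p - 1) ℓ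
      = ∑ g ∈ range p,
          (∑ i ∈ range j, C (R := ℤ) (ibinom (β:ℤ) ((p : ℤ) + i - j - t - g))) *
            ((X : PowerSeries ℤ)^(2*g) * Upsilon L ((p : ℤ) - 1 - 2*g) ℓ) := by
  calc ∑ α ∈ range (β+1), C (R := ℤ) (ibinom (β:ℤ) (α:ℤ)) *
        ∑ i ∈ range j,
          (X : PowerSeries ℤ)^(2*p - 2*(j+t+α-i)) *
            Upsilon L (2*((j : ℤ) + t + α - i) - p - 1) ℓ
      = ∑ i ∈ range j, ∑ α ∈ range (β+1), C (R := ℤ) (ibinom (β:ℤ) (α:ℤ)) *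
          ((X : PowerSeries ℤ)^(2*p - 2*(j+t+α-i)) *
            Upsilon L (2*((j : ℤ) + t + α - i) - p - 1) ℓ) := by
        simp_rw [Finset.mul_sum]; exact Finset.sum_comm
    _ = ∑ i ∈ range j, ∑ g ∈ range p,
          C (R := ℤ) (ibinom (β:ℤ) ((p : ℤ) + i - j - t - g)) *
            ((X : PowerSeries ℤ)^(2*g) * Upsilon L ((p : ℤ) - 1 - 2*g) ℓ) :=
        Finset.sum_congr rfl fun i hi =>
          core L p ℓ j t β i hj1 hjp hbt (mem_range.mp hi)
    _ = _ := by simp_rw [Finset.sum_mul]; exact Finset.sum_comm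

/-- Claim 3.6:
`B̃_{𝓛,p}^{(ℓ)}(z) = Σ_{g=0}^{p-1} z^{2g} Υ_{p-1-2g}^{(ℓ)}(z) C_{p,g}^{(ℓ)}`. -/
theorem stmt8 {n : ℕ} (hn : 2 ≤ n) (L : Set (Fin n → ℤ)) {p ℓ : ℕ}
    (hp1 : 1 ≤ p) (hpn : p ≤ n) (hℓ : ℓ ≤ n) :
    Btilde L p ℓ =
      ∑ g ∈ range p,
        (X : PowerSeries ℤ)^(2*g) * Upsilon L ((p : ℤ) - 1 - 2*g) ℓ * C (R := ℤ) (Cpg n p g ℓ) := by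
  calc Btilde L p ℓ
      = ∑ j ∈ Icc 1 p, C (R := ℤ) ((-1 : ℤ)^(j-1)) *
          ∑ t ∈ range ((p-j)/2 + 1), C (R := ℤ) (ibinom ((n : ℤ) - p + j + 2*t) t) *
            ∑ β ∈ range (p-j-2*t+1), C (R := ℤ) (2^(p-j-2*t-β) * ibinom ((n : ℤ) - ℓ) β * ibinom (ℓ : ℤ) ((p-j-2*t-β : ℕ))) *
              ∑ g ∈ range p, (∑ i ∈ range j, C (R := ℤ) (ibinom (β:ℤ) ((p : ℤ) + i - j - t - g))) * ((X : PowerSeries ℤ)^(2*g) * Upsilon L ((p : ℤ) - 1 - 2*g) ℓ) := by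
        unfold Btilde
        refine Finset.sum_congr rfl fun j hj => congrArg (_ * ·) ?_
        refine Finset.sum_congr rfl fun t ht => congrArg (_ * ·) ?_
        refine Finset.sum_congr rfl fun β hβ => congrArg (_ * ·) ?_
        refine inner L p ℓ j t β (mem_Icc.mp hj).1 (mem_Icc.mp hj).2 ?_
        have h1 := mem_range.mp ht
        have h2 := mem_range.mp hβ
        have h3 := (mem_Icc.mp hj).1
        have h4 := (mem_Icc.mp hj).2
        omega
    _ = ∑ j ∈ Icc 1 p, C (R := ℤ) ((-1 : ℤ)^(j-1)) *
          ∑ t ∈ range ((p-j)/2 + 1), C (R := ℤ) (ibinom ((n : ℤ) - p + j + 2*t) t) *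
            ∑ g ∈ range p,
              (∑ β ∈ range (p-j-2*t+1), C (R := ℤ) (2^(p-j-2*t-β) * ibinom ((n : ℤ) - ℓ) β * ibinom (ℓ : ℤ) ((p-j-2*t-β : ℕ))) * (∑ i ∈ range j, C (R := ℤ) (ibinom (β:ℤ) ((p : ℤ) + i - j - t - g)))) * ((X : PowerSeries ℤ)^(2*g) * Upsilon L ((p : ℤ) - 1 - 2*g) ℓ) := by
        refine Finset.sum_congr rfl fun j hj => congrArg (_ * ·) ?_
        refine Finset.sum_congr rfl fun t ht => congrArg (_ * ·) ?_
        exact sum_swap_aux (range (p-j-2*t+1)) p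
          (fun β => C (R := ℤ) (2^(p-j-2*t-β) * ibinom ((n : ℤ) - ℓ) β * ibinom (ℓ : ℤ) ((p-j-2*t-β : ℕ))))
          (fun β g => (∑ i ∈ range j, C (R := ℤ) (ibinom (β:ℤ) ((p : ℤ) + i - j - t - g))))
          (fun g => ((X : PowerSeries ℤ)^(2*g) * Upsilon L ((p : ℤ) - 1 - 2*g) ℓ))
    _ = ∑ j ∈ Icc 1 p, C (R := ℤ) ((-1 : ℤ)^(j-1)) *
          ∑ g ∈ range p,
            (∑ t ∈ range ((p-j)/2 + 1), C (R := ℤ) (ibinom ((n : ℤ) - p + j + 2*t) t) *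
              ∑ β ∈ range (p-j-2*t+1), C (R := ℤ) (2^(p-j-2*t-β) * ibinom ((n : ℤ) - ℓ) β * ibinom (ℓ : ℤ) ((p-j-2*t-β : ℕ))) * (∑ i ∈ range j, C (R := ℤ) (ibinom (β:ℤ) ((p : ℤ) + i - j - t - g)))) * ((X : PowerSeries ℤ)^(2*g) * Upsilon L ((p : ℤ) - 1 - 2*g) ℓ) := by
        refine Finset.sum_congr rfl fun j hj => congrArg (_ * ·) ?_
        exact sum_swap_aux (range ((p-j)/2 + 1)) p
          (fun t => C (R := ℤ) (ibinom ((n : ℤ) - p + j + 2*t) t))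
          (fun t g => ∑ β ∈ range (p-j-2*t+1), C (R := ℤ) (2^(p-j-2*t-β) * ibinom ((n : ℤ) - ℓ) β * ibinom (ℓ : ℤ) ((p-j-2*t-β : ℕ))) * (∑ i ∈ range j, C (R := ℤ) (ibinom (β:ℤ) ((p : ℤ) + i - j - t - g))))
          (fun g => ((X : PowerSeries ℤ)^(2*g) * Upsilon L ((p : ℤ) - 1 - 2*g) ℓ))
    _ = ∑ g ∈ range p,
          (∑ j ∈ Icc 1 p, C (R := ℤ) ((-1 : ℤ)^(j-1)) *
            ∑ t ∈ range ((p-j)/2 + 1), C (R := ℤ) (ibinom ((n : ℤ) - p + j + 2*t) t) *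
              ∑ β ∈ range (p-j-2*t+1), C (R := ℤ) (2^(p-j-2*t-β) * ibinom ((n : ℤ) - ℓ) β * ibinom (ℓ : ℤ) ((p-j-2*t-β : ℕ))) * (∑ i ∈ range j, C (R := ℤ) (ibinom (β:ℤ) ((p : ℤ) + i - j - t - g)))) * ((X : PowerSeries ℤ)^(2*g) * Upsilon L ((p : ℤ) - 1 - 2*g) ℓ) :=
        sum_swap_aux (Icc 1 p) p
          (fun j => C (R := ℤ) ((-1 : ℤ)^(j-1)))
          (fun j g => ∑ t ∈ range ((p-j)/2 + 1), C (R := ℤ) (ibinom ((n : ℤ) - p + j + 2*t) t) *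
              ∑ β ∈ range (p-j-2*t+1), C (R := ℤ) (2^(p-j-2*t-β) * ibinom ((n : ℤ) - ℓ) β * ibinom (ℓ : ℤ) ((p-j-2*t-β : ℕ))) * (∑ i ∈ range j, C (R := ℤ) (ibinom (β:ℤ) ((p : ℤ) + i - j - t - g))))
          (fun g => ((X : PowerSeries ℤ)^(2*g) * Upsilon L ((p : ℤ) - 1 - 2*g) ℓ))
    _ = _ := by
        refine Finset.sum_congr rfl fun g hg => ?_
        have hC : C (R := ℤ) (Cpg n p g ℓ)
            = ∑ j ∈ Icc 1 p, C (R := ℤ) ((-1 : ℤ)^(j-1)) *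
                ∑ t ∈ range ((p-j)/2 + 1), C (R := ℤ) (ibinom ((n : ℤ) - p + j + 2*t) t) *
                  ∑ β ∈ range (p-j-2*t+1), C (R := ℤ) (2^(p-j-2*t-β) * ibinom ((n : ℤ) - ℓ) β * ibinom (ℓ : ℤ) ((p-j-2*t-β : ℕ))) *
                    ∑ i ∈ range j, C (R := ℤ) (ibinom (β:ℤ) ((p : ℤ) + i - j - t - g)) := by
          simp only [Cpg, map_sum, map_mul]
        rw [hC]
        ring
end
end

section
/- Let n ≥ 2, 1 ≤ p ≤ n, let g be an integer with 0 ≤ g ≤ (p−1)/2, and let ℓ be an integer with max(0, n+1+2g−p) ≤ ℓ ≤ n−1. Then C_{p,g}^{(ℓ)} = 0. (This is part of Claim 3.8 in the proof of Theorem 2.2.) -/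
noncomputable section

open Finset PowerSeries

noncomputable def pc (g β E : ℕ) : ℤ :=
  ((1 + Polynomial.X : Polynomial ℤ)^β * Polynomial.X^E).coeff g

lemma pc_eq (g β E : ℕ) : pc g β E = if E ≤ g then (β.choose (g-E) : ℤ) else 0 := by
  rw [pc, Polynomial.coeff_mul_X_pow']
  split_ifs with h
  · rw [Polynomial.coeff_one_add_X_pow]
  · rfl

lemma pc_zero {g E : ℕ} (β : ℕ) (h : g < E) : pc g β E = 0 := by
  rw [pc_eq, if_neg (by omega)]

lemma ibinom_natCast (b c : ℕ) : ibinom (b : ℤ) (c : ℤ) = (b.choose c : ℤ) := by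
  unfold ibinom
  split_ifs with h
  · rcases h with h | h
    · omega
    · rw [Nat.choose_eq_zero_of_lt (by exact_mod_cast h)]; rfl
  · simp

lemma key1 (g β E : ℕ) (m : ℤ) (hm : m = E + β - g) : ibinom (β : ℤ) m = pc g β E := by
  rw [pc_eq]
  split_ifs with h
  · by_cases h2 : g - E ≤ β
    · have hmn : m = ((β - (g - E) : ℕ) : ℤ) := by omega
      rw [hmn, ibinom_natCast, Nat.choose_symm h2]
    · rw [Nat.choose_eq_zero_of_lt (by omega : β < g - E)]
      unfold ibinom
      rw [if_pos (Or.inl (by omega))]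
      simp
  · unfold ibinom
    rw [if_pos (Or.inr (by omega))]

lemma tcol (g K β E : ℕ) :
    ∑ t ∈ Finset.range (g+1), (K.choose t : ℤ) * pc g β (t + E) = pc g (β + K) E := by
  have h1 : ((1 + Polynomial.X : Polynomial ℤ)^(β+K) * Polynomial.X^E)
      = ((1 + Polynomial.X)^β * Polynomial.X^E) * (1 + Polynomial.X)^K := by ring
  rw [pc, h1, Polynomial.coeff_mul, Finset.Nat.sum_antidiagonal_eq_sum_range_succ_mk,
      ← Finset.sum_range_reflect]
  apply Finset.sum_congr rfl
  intro k hk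
  simp only [Finset.mem_range] at hk
  rw [show g + 1 - 1 - k = g - k from by omega, Polynomial.coeff_one_add_X_pow]
  rw [pc, show Polynomial.X ^ ((g-k) + E) = Polynomial.X ^ E * Polynomial.X ^ (g-k) from by
    rw [add_comm, pow_add], ← mul_assoc, Polynomial.coeff_mul_X_pow', if_pos (by omega : g - k ≤ g),
    show g - (g - k) = k from by omega]
  ring

noncomputable def trm (n g a ℓ p s t β i : ℕ) : ℤ :=
  (-1)^(p-1+s) * ((n-s).choose t : ℤ) *
    (2^(s-β) * ((a.choose β : ℕ) : ℤ) * ((ℓ.choose (s-β) : ℕ) : ℤ)) * pc g β (t+i+(s-β))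

lemma trm_van {n g a ℓ p : ℕ} (hap : a + 2*g + 1 ≤ p) (s t β i : ℕ)
    (h : g < t ∨ p ≤ s + 2*t + i) : trm n g a ℓ p s t β i = 0 := by
  by_cases hb : a < β
  · simp [trm, Nat.choose_eq_zero_of_lt hb]
  · have hE : g < t + i + (s - β) := by omega
    simp [trm, pc_zero β hE]

lemma trm_b0 {n g a ℓ p : ℕ} (s t β i : ℕ) (h : a < β) : trm n g a ℓ p s t β i = 0 := by
  simp [trm, Nat.choose_eq_zero_of_lt h]

lemma trm_c0 {n g a ℓ p : ℕ} (s t β i : ℕ) (h : ℓ < s - β) : trm n g a ℓ p s t β i = 0 := by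
  simp [trm, Nat.choose_eq_zero_of_lt h]

noncomputable def inn (n g a ℓ p s t : ℕ) : ℤ :=
  ∑ β ∈ Finset.range (s+1), ∑ i ∈ Finset.range (p-s-2*t), trm n g a ℓ p s t β i

lemma inn_van {n g a ℓ p : ℕ} (hap : a + 2*g + 1 ≤ p) (s t : ℕ)
    (h : g < t ∨ p ≤ s + 2*t) : inn n g a ℓ p s t = 0 :=
  Finset.sum_eq_zero fun β _ => Finset.sum_eq_zero fun i _ =>
    trm_van hap s t β i (by omega)

lemma sum_Icc_one (p : ℕ) (F : ℕ → ℤ) :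
    ∑ j ∈ Finset.Icc 1 p, F j = ∑ σ ∈ Finset.range p, F (p - σ) := by
  rw [show Finset.Icc 1 p = Finset.Ico 1 (p+1) from (Finset.Ico_add_one_right_eq_Icc 1 p).symm,
      Finset.sum_Ico_eq_sum_range, ← Finset.sum_range_reflect]
  apply Finset.sum_congr (by norm_num)
  intro σ hσ
  simp only [Finset.mem_range] at hσ
  congr 1
  omega

lemma tri (n g a ℓ p t i : ℕ) (haℓ : a + ℓ = n) :
    ∑ s ∈ Finset.range (n+1), ∑ β ∈ Finset.range (s+1), trm n g a ℓ p s t β i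
      = ∑ β ∈ Finset.range (a+1), ∑ c ∈ Finset.range (ℓ+1), trm n g a ℓ p (β+c) t β i := by
  have h1 : ∀ s ∈ Finset.range (n+1),
      ∑ β ∈ Finset.range (s+1), trm n g a ℓ p s t β i
        = ∑ β ∈ Finset.range (n+1), if β ≤ s then trm n g a ℓ p s t β i else 0 := by
    intro s hs
    simp only [Finset.mem_range] at hs
    rw [← Finset.sum_filter,
      show Finset.filter (fun β => β ≤ s) (Finset.range (n+1)) = Finset.range (s+1) from by
        ext x; simp; omega]
  rw [Finset.sum_congr rfl h1, Finset.sum_comm]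
  have h2 : ∀ β ∈ Finset.range (n+1),
      (∑ s ∈ Finset.range (n+1), if β ≤ s then trm n g a ℓ p s t β i else 0)
        = ∑ c ∈ Finset.range (n+1-β), trm n g a ℓ p (β+c) t β i := by
    intro β hβ
    simp only [Finset.mem_range] at hβ
    rw [← Finset.sum_filter,
      show Finset.filter (fun s => β ≤ s) (Finset.range (n+1)) = Finset.Ico β (n+1) from by
        ext x; simp [Finset.mem_Ico]; omega,
      Finset.sum_Ico_eq_sum_range]
  rw [Finset.sum_congr rfl h2]
  rw [show ∑ β ∈ Finset.range (n+1), ∑ c ∈ Finset.range (n+1-β), trm n g a ℓ p (β+c) t β i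
      = ∑ β ∈ Finset.range (a+1), ∑ c ∈ Finset.range (n+1-β), trm n g a ℓ p (β+c) t β i from
    (Finset.sum_subset (Finset.range_subset_range.mpr (by omega))
      (fun β hβ hβn => Finset.sum_eq_zero fun c _ =>
        trm_b0 _ _ _ _ (by simp only [Finset.mem_range] at hβ hβn ⊢; omega))).symm]
  apply Finset.sum_congr rfl
  intro β hβ
  simp only [Finset.mem_range] at hβ
  exact (Finset.sum_subset (Finset.range_subset_range.mpr (by omega : ℓ+1 ≤ n+1-β))
    (fun c hc hcn => trm_c0 _ _ _ _ (by simp only [Finset.mem_range] at hc hcn ⊢; omega))).symm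

lemma tsumc (n g a ℓ p i β c : ℕ) (hβ : β ≤ a) (hc : c ≤ ℓ) (hn : β + c ≤ n) :
    ∑ t ∈ Finset.range (g+1), trm n g a ℓ p (β+c) t β i
      = (-1)^(p-1+c) * ((-1:ℤ))^β * (2^c * ((a.choose β : ℕ):ℤ) * ((ℓ.choose c : ℕ):ℤ))
          * pc g (n-c) (i+c) := by
  have hbc : β + c - β = c := by omega
  have h1 : ∀ t, trm n g a ℓ p (β+c) t β i
      = ((-1)^(p-1+c) * ((-1:ℤ))^β * (2^c * ((a.choose β:ℕ):ℤ) * ((ℓ.choose c:ℕ):ℤ)))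
          * (((n-(β+c)).choose t : ℤ) * pc g β (t+(i+c))) := by
    intro t
    unfold trm
    rw [hbc, show t+i+c = t+(i+c) from by omega,
        show (-1:ℤ)^(p-1+(β+c)) = (-1)^(p-1+c) * (-1)^β from by rw [← pow_add]; congr 1; omega]
    ring
  rw [Finset.sum_congr rfl (fun t _ => h1 t), ← Finset.mul_sum, tcol,
      show β + (n - (β+c)) = n - c from by omega]

/-- part of Claim 3.8: `C_{p,g}^{(ℓ)} = 0` for
`max(0, n+1+2g-p) ≤ ℓ ≤ n-1`. -/
theorem stmt10 {n p g ℓ : ℕ} (hn : 2 ≤ n) (hp1 : 1 ≤ p) (hpn : p ≤ n)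
    (hg : 2*g + 1 ≤ p) (hℓ1 : n + 1 + 2*g ≤ ℓ + p) (hℓ2 : ℓ ≤ n - 1) :
    Cpg n p g ℓ = 0 := by
  obtain ⟨a, haℓ⟩ : ∃ a, a + ℓ = n := ⟨n - ℓ, by omega⟩
  have ha1 : 1 ≤ a := by omega
  have hap : a + 2*g + 1 ≤ p := by omega
  have hgp : g + 1 ≤ p := by omega
  -- Step 1: termwise conversion
  have step1 : Cpg n p g ℓ = ∑ j ∈ Icc 1 p, ∑ t ∈ range ((p-j)/2+1),
      ∑ β ∈ range (p-j-2*t+1), ∑ i ∈ range j, trm n g a ℓ p (p-j-2*t) t β i := by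
    unfold Cpg
    simp only [Finset.mul_sum]
    refine Finset.sum_congr rfl fun j hj => Finset.sum_congr rfl fun t ht =>
      Finset.sum_congr rfl fun β hβ => Finset.sum_congr rfl fun i hi => ?_
    simp only [Finset.mem_Icc, Finset.mem_range] at hj ht hβ hi
    have h2t : 2*t ≤ p - j := by omega
    have e1 : ibinom ((n:ℤ) - p + j + 2*t) (t:ℤ) = (((n - (p-j-2*t)).choose t : ℕ) : ℤ) := by
      rw [show ((n:ℤ) - p + j + 2*t) = (((n - (p-j-2*t)) : ℕ) : ℤ) from by omega]
      exact ibinom_natCast _ _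
    have e2 : ibinom ((n:ℤ) - ℓ) (β:ℤ) = ((a.choose β : ℕ) : ℤ) := by
      rw [show ((n:ℤ) - ℓ) = ((a : ℕ) : ℤ) from by omega]
      exact ibinom_natCast _ _
    have e3 : ibinom (ℓ:ℤ) ((p-j-2*t-β : ℕ) : ℤ) = ((ℓ.choose (p-j-2*t-β) : ℕ) : ℤ) :=
      ibinom_natCast _ _
    have e4 : ibinom (β:ℤ) ((p:ℤ) + i - j - t - g) = pc g β (t+i+((p-j-2*t)-β)) :=
      key1 g β _ _ (by omega)
    have e5 : ((-1:ℤ))^(j-1) = (-1)^(p-1+(p-j-2*t)) := by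
      rw [neg_one_pow_eq_pow_mod_two, show (j-1) % 2 = (p-1+(p-j-2*t)) % 2 from by omega,
          ← neg_one_pow_eq_pow_mod_two]
    rw [e1, e2, e3, e4, e5]
    unfold trm
    ring
  rw [step1, sum_Icc_one p _]
  -- Step 2: σ-form with inn
  have step2 : ∑ σ ∈ range p, ∑ t ∈ range ((p-(p-σ))/2+1), ∑ β ∈ range (p-(p-σ)-2*t+1),
      ∑ i ∈ range (p-σ), trm n g a ℓ p (p-(p-σ)-2*t) t β i
      = ∑ σ ∈ range p, ∑ t ∈ range (σ/2+1), inn n g a ℓ p (σ-2*t) t := by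
    refine Finset.sum_congr rfl fun σ hσ => ?_
    simp only [Finset.mem_range] at hσ
    rw [show p - (p - σ) = σ from by omega]
    refine Finset.sum_congr rfl fun t ht => ?_
    simp only [Finset.mem_range] at ht
    unfold inn
    rw [show p - σ = p - (σ - 2*t) - 2*t from by omega]
  rw [step2]
  -- Step 3: to rectangular (t,s) sum
  have step3 : ∑ σ ∈ range p, ∑ t ∈ range (σ/2+1), inn n g a ℓ p (σ-2*t) t
      = ∑ t ∈ range p, ∑ σ ∈ range p, (if 2*t ≤ σ then inn n g a ℓ p (σ-2*t) t else 0) := by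
    rw [Finset.sum_comm]
    refine Finset.sum_congr rfl fun σ hσ => ?_
    simp only [Finset.mem_range] at hσ
    rw [← Finset.sum_filter,
      show Finset.filter (fun t => 2*t ≤ σ) (Finset.range p) = Finset.range (σ/2+1) from by
        ext x; simp; omega]
  rw [step3]
  have step4 : ∑ t ∈ range p, ∑ σ ∈ range p, (if 2*t ≤ σ then inn n g a ℓ p (σ-2*t) t else 0)
      = ∑ t ∈ range p, ∑ s ∈ range (n+1), inn n g a ℓ p s t := by
    refine Finset.sum_congr rfl fun t ht => ?_
    rw [← Finset.sum_filter,
      show Finset.filter (fun σ => 2*t ≤ σ) (Finset.range p) = Finset.Ico (2*t) p from by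
        ext x; simp [Finset.mem_Ico]; omega,
      Finset.sum_Ico_eq_sum_range]
    have e : ∀ k ∈ Finset.range (p - 2*t), inn n g a ℓ p (2*t + k - 2*t) t
        = inn n g a ℓ p k t := by
      intro k _; rw [show 2*t + k - 2*t = k from by omega]
    rw [Finset.sum_congr rfl e]
    exact Finset.sum_subset (Finset.range_subset_range.mpr (by omega))
      (fun s hs hsn => inn_van hap s t (Or.inr (by
        simp only [Finset.mem_range] at hs hsn; omega)))
  rw [step4]
  have step5 : ∑ t ∈ range p, ∑ s ∈ range (n+1), inn n g a ℓ p s t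
      = ∑ t ∈ range (g+1), ∑ s ∈ range (n+1), inn n g a ℓ p s t := by
    refine (Finset.sum_subset (Finset.range_subset_range.mpr (by omega)) ?_).symm
    intro t ht htn
    simp only [Finset.mem_range] at ht htn
    exact Finset.sum_eq_zero fun s _ => inn_van hap s t (Or.inl (by omega))
  rw [step5]
  -- Step 6: extend i-range
  have step6 : ∑ t ∈ range (g+1), ∑ s ∈ range (n+1), inn n g a ℓ p s t
      = ∑ t ∈ range (g+1), ∑ s ∈ range (n+1), ∑ β ∈ range (s+1), ∑ i ∈ range p,
          trm n g a ℓ p s t β i := by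
    refine Finset.sum_congr rfl fun t _ => Finset.sum_congr rfl fun s _ => ?_
    unfold inn
    refine Finset.sum_congr rfl fun β _ => ?_
    exact Finset.sum_subset (Finset.range_subset_range.mpr (by omega))
      (fun i hi hin => trm_van hap s t β i (Or.inr (by
        simp only [Finset.mem_range] at hi hin; omega)))
  rw [step6]
  -- Step 7: reorder i out
  have step7 : ∑ t ∈ range (g+1), ∑ s ∈ range (n+1), ∑ β ∈ range (s+1), ∑ i ∈ range p,
      trm n g a ℓ p s t β i
      = ∑ t ∈ range (g+1), ∑ i ∈ range p, ∑ s ∈ range (n+1), ∑ β ∈ range (s+1),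
          trm n g a ℓ p s t β i := by
    refine Finset.sum_congr rfl fun t _ => ?_
    rw [show ∑ s ∈ range (n+1), ∑ β ∈ range (s+1), ∑ i ∈ range p, trm n g a ℓ p s t β i
        = ∑ s ∈ range (n+1), ∑ i ∈ range p, ∑ β ∈ range (s+1), trm n g a ℓ p s t β i from
      Finset.sum_congr rfl fun s _ => Finset.sum_comm]
    exact Finset.sum_comm
  rw [step7]
  -- Step 8: triangular reindex
  have step8 : ∑ t ∈ range (g+1), ∑ i ∈ range p, ∑ s ∈ range (n+1), ∑ β ∈ range (s+1),
      trm n g a ℓ p s t β i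
      = ∑ i ∈ range p, ∑ β ∈ range (a+1), ∑ c ∈ range (ℓ+1), ∑ t ∈ range (g+1),
          trm n g a ℓ p (β+c) t β i := by
    rw [show ∑ t ∈ range (g+1), ∑ i ∈ range p, ∑ s ∈ range (n+1), ∑ β ∈ range (s+1),
        trm n g a ℓ p s t β i
        = ∑ t ∈ range (g+1), ∑ i ∈ range p, ∑ β ∈ range (a+1), ∑ c ∈ range (ℓ+1),
          trm n g a ℓ p (β+c) t β i from
      Finset.sum_congr rfl fun t _ => Finset.sum_congr rfl fun i _ => tri n g a ℓ p t i haℓ]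
    rw [Finset.sum_comm]
    refine Finset.sum_congr rfl fun i _ => ?_
    rw [Finset.sum_comm]
    refine Finset.sum_congr rfl fun β _ => ?_
    exact Finset.sum_comm
  rw [step8]
  -- Step 9: collapse t-sum and kill with alternating sum
  refine Finset.sum_eq_zero fun i _ => ?_
  rw [show ∑ β ∈ range (a+1), ∑ c ∈ range (ℓ+1), ∑ t ∈ range (g+1),
      trm n g a ℓ p (β+c) t β i
      = ∑ c ∈ range (ℓ+1), ∑ β ∈ range (a+1), ∑ t ∈ range (g+1),
        trm n g a ℓ p (β+c) t β i from Finset.sum_comm]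
  refine Finset.sum_eq_zero fun c hc => ?_
  simp only [Finset.mem_range] at hc
  have e : ∀ β ∈ Finset.range (a+1), ∑ t ∈ range (g+1), trm n g a ℓ p (β+c) t β i
      = ((-1)^(p-1+c) * (2^c * ((ℓ.choose c : ℕ):ℤ)) * pc g (n-c) (i+c))
          * (((-1:ℤ))^β * ((a.choose β : ℕ):ℤ)) := by
    intro β hβ
    simp only [Finset.mem_range] at hβ
    rw [tsumc n g a ℓ p i β c (by omega) (by omega) (by omega)]
    ring
  rw [Finset.sum_congr rfl e, ← Finset.mul_sum]
  have hz : ∑ β ∈ Finset.range (a+1), (-1:ℤ)^β * ((a.choose β : ℕ) : ℤ) = 0 := by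
    have h := Int.alternating_sum_range_choose (n := a)
    rw [if_neg (by omega)] at h
    exact h
  rw [hz, mul_zero]
end
end
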